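/- arXiv:2011.01115 — 3 statements merged into one kernel-verified Lean document; each statement's English description precedes it below -/
import Mathlib

section
/- Let d ≥ 1, m ∈ ℕ, and let V : ℝ^d → ℝ be of class C^m with all partial derivatives of order ≤ m bounded. There exists a constant C ∈ (0,∞), depending only on m, d, and ‖V‖_{C^m}, such that for every u : ℝ^d → ℂ of class C^m with all partial derivatives of order ≤ m in L², the function Ψ₀(u) = (V ⋆ |u|²)·u is of class C^m with all partial derivatives of order ≤ m in L², and ‖Ψ₀(u)‖_{H^m} ≤ C ‖u‖_{L²}² ‖u‖_{H^m}. -/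
set_option maxHeartbeats 1000000
set_option synthInstance.maxHeartbeats 400000


open MeasureTheory Filter
open scoped ENNReal NNReal BigOperators Topology

noncomputable section

/-- Partial derivative in coordinate direction `i`. -/
def pd {d : ℕ} {E : Type*} [NormedAddCommGroup E] [NormedSpace ℝ E]
    (i : Fin d) (f : (Fin d → ℝ) → E) : (Fin d → ℝ) → E :=
  fun x => fderiv ℝ f x (Pi.single i 1)

/-- Iterated partial derivative associated with the multi-index `α`. -/
def md {d : ℕ} {E : Type*} [NormedAddCommGroup E] [NormedSpace ℝ E]
    (α : Fin d → ℕ) (f : (Fin d → ℝ) → E) : (Fin d → ℝ) → E :=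
  (List.finRange d).foldr (fun i g => (pd i)^[α i] g) f

/-- L² norm on ℝ^d. -/
def l2norm {d : ℕ} {E : Type*} [NormedAddCommGroup E]
    (f : (Fin d → ℝ) → E) : ℝ :=
  (eLpNorm f 2 (volume : Measure (Fin d → ℝ))).toReal

/-- Sobolev `H^m` norm. -/
def hnorm (d m : ℕ) {E : Type*} [NormedAddCommGroup E] [NormedSpace ℝ E]
    (f : (Fin d → ℝ) → E) : ℝ :=
  Real.sqrt (∑ α : Fin d → Fin (m + 1),
    if (∑ i, (α i : ℕ)) ≤ m then (l2norm (md (fun i => (α i : ℕ)) f)) ^ 2 else 0)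

/-- `C^m` norm: sup over multi-indices of order at most `m` and over points. -/
def cnorm (d m : ℕ) {E : Type*} [NormedAddCommGroup E] [NormedSpace ℝ E]
    (f : (Fin d → ℝ) → E) : ℝ :=
  ⨆ α : Fin d → Fin (m + 1), ⨆ x : Fin d → ℝ,
    if (∑ i, (α i : ℕ)) ≤ m then ‖md (fun i => (α i : ℕ)) f x‖ else 0

/-- `f` is of class `C^m` with all partial derivatives of order at most `m` bounded. -/
def ContDiffBdd (d m : ℕ) {E : Type*} [NormedAddCommGroup E] [NormedSpace ℝ E]
    (f : (Fin d → ℝ) → E) : Prop :=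
  ContDiff ℝ m f ∧ ∀ α : Fin d → ℕ, (∑ i, α i) ≤ m → ∃ B : ℝ, ∀ x, ‖md α f x‖ ≤ B

/-- `f` is of class `C^m` with all partial derivatives of order at most `m` in `L²`. -/
def ContDiffL2 (d m : ℕ) {E : Type*} [NormedAddCommGroup E] [NormedSpace ℝ E]
    (f : (Fin d → ℝ) → E) : Prop :=
  ContDiff ℝ m f ∧ ∀ α : Fin d → ℕ, (∑ i, α i) ≤ m →
    MemLp (md α f) 2 (volume : Measure (Fin d → ℝ))

/-- Fourier transform with kernel `exp(-2πi⟨x,ζ⟩)`. -/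
def ftrans {d : ℕ} (f : (Fin d → ℝ) → ℂ) (ζ : Fin d → ℝ) : ℂ :=
  ∫ x : Fin d → ℝ, Complex.exp (-(2 * Real.pi * Complex.I * (∑ i, x i * ζ i))) * f x

end



namespace S3aux

variable {d : ℕ} {E F : Type*} [NormedAddCommGroup E] [NormedSpace ℝ E]
  [NormedAddCommGroup F] [NormedSpace ℝ F]

noncomputable section
def mdL (l : List (Fin d)) (f : (Fin d → ℝ) → E) : (Fin d → ℝ) → E := l.foldr pd f
@[simp] lemma mdL_nil (f : (Fin d → ℝ) → E) : mdL [] f = f := rfl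
lemma mdL_cons (i : Fin d) (l : List (Fin d)) (f : (Fin d → ℝ) → E) :
    mdL (i :: l) f = pd i (mdL l f) := rfl
lemma mdL_append (l₁ l₂ : List (Fin d)) (f : (Fin d → ℝ) → E) :
    mdL (l₁ ++ l₂) f = mdL l₁ (mdL l₂ f) := List.foldr_append
def listOf (α : Fin d → ℕ) : List (Fin d) :=
  (List.finRange d).flatMap fun i => List.replicate (α i) i

lemma mdL_replicate (n : ℕ) (i : Fin d) (f : (Fin d → ℝ) → E) :
    mdL (List.replicate n i) f = (pd i)^[n] f := by
  induction n with
  | zero => rfl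
  | succ n ih =>
      rw [List.replicate_succ]
      show pd i (mdL (List.replicate n i) f) = _
      rw [ih, Function.iterate_succ']
      rfl

lemma md_eq_mdL (α : Fin d → ℕ) (f : (Fin d → ℝ) → E) : md α f = mdL (listOf α) f := by
  show (List.finRange d).foldr (fun i g => (pd i)^[α i] g) f = _
  unfold listOf
  induction List.finRange d with
  | nil => rfl
  | cons i l ih => rw [List.foldr_cons, ih, List.flatMap_cons, mdL_append, mdL_replicate]

lemma count_flatMap_aux (α : Fin d → ℕ) (j : Fin d) :
    ∀ L : List (Fin d), L.Nodup → j ∈ L →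
      (L.flatMap fun i => List.replicate (α i) i).count j = α j := by
  intro L
  induction L with
  | nil => intro _ h; simp at h
  | cons i l ih =>
      intro h1 h2
      rw [List.flatMap_cons, List.count_append, List.count_replicate]
      rcases List.mem_cons.1 h2 with h | h
      · subst h
        have hnot : j ∉ l := (List.nodup_cons.1 h1).1
        have hz : List.count j (l.flatMap fun i => List.replicate (α i) i) = 0 := by
          rw [List.count_eq_zero]
          intro hmem
          rcases List.mem_flatMap.1 hmem with ⟨i', hi', hmem'⟩
          rw [List.eq_of_mem_replicate hmem'] at hnot
          exact hnot hi'
        simp [hz]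
      · have hne : i ≠ j := by rintro rfl; exact (List.nodup_cons.1 h1).1 h
        rw [ih (List.nodup_cons.1 h1).2 h]
        simp [hne]

lemma count_listOf (α : Fin d → ℕ) (j : Fin d) : (listOf α).count j = α j :=
  count_flatMap_aux α j _ (List.nodup_finRange d) (List.mem_finRange j)

lemma length_listOf (α : Fin d → ℕ) : (listOf α).length = ∑ i, α i := by
  unfold listOf
  rw [List.length_flatMap, Fin.sum_univ_def]
  congr 1
  simp [Function.comp_def]

lemma sum_count (l : List (Fin d)) : (∑ i, l.count i) = l.length := by
  induction l with
  | nil => simp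
  | cons a l ih =>
      simp only [List.count_cons, List.length_cons, ← ih]
      rw [Finset.sum_add_distrib]
      simp

lemma perm_listOf_count (l : List (Fin d)) : l.Perm (listOf fun i => l.count i) := by
  rw [List.perm_iff_count]
  intro a
  rw [count_listOf]

lemma pd_eq_comp (i : Fin d) (f : (Fin d → ℝ) → E) :
    pd i f = fun x => (ContinuousLinearMap.apply ℝ E (Pi.single i (1:ℝ))) (fderiv ℝ f x) := rfl

lemma contDiff_pd {n : ℕ} {f : (Fin d → ℝ) → E} (hf : ContDiff ℝ (n + 1 : ℕ) f) (i : Fin d) :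
    ContDiff ℝ n (pd i f) := by
  rw [pd_eq_comp]
  have h1 : ContDiff ℝ n (fderiv ℝ f) := hf.fderiv_right (by exact_mod_cast le_refl (n+1))
  exact (ContinuousLinearMap.apply ℝ E (Pi.single i (1:ℝ))).contDiff.comp h1

lemma mdL_contDiff {f : (Fin d → ℝ) → E} : ∀ (l : List (Fin d)) {n : ℕ},
    ContDiff ℝ (l.length + n : ℕ) f → ContDiff ℝ n (mdL l f) := by
  intro l
  induction l with
  | nil => intro n hf; simpa using hf
  | cons i l ih =>
      intro n hf
      show ContDiff ℝ n (pd i (mdL l f))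
      have h2 : ContDiff ℝ (n+1 : ℕ) (mdL l f) := by
        apply ih
        have : l.length + (n + 1) = (i :: l).length + n := by simp [List.length_cons]; ring
        rwa [this]
      exact contDiff_pd h2 i

lemma second_deriv (f : (Fin d → ℝ) → E) (hf : ContDiff ℝ 2 f) (x : Fin d → ℝ) (v w : Fin d → ℝ) :
    fderiv ℝ (fderiv ℝ f) x v w = fderiv ℝ (fderiv ℝ f) x w v := by
  apply second_derivative_symmetric (f := f) (fun y => (hf.differentiable (by norm_num) y).hasFDerivAt)
  exact ((hf.fderiv_right (m := 1) (by norm_num)).differentiable (by norm_num) x).hasFDerivAt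

lemma pd_fderiv_pt {f : (Fin d → ℝ) → E} (hf : ContDiff ℝ 2 f) (i : Fin d) (x : Fin d → ℝ) :
    fderiv ℝ (pd i f) x = (ContinuousLinearMap.apply ℝ E (Pi.single i (1:ℝ))).comp
      (fderiv ℝ (fderiv ℝ f) x) := by
  rw [pd_eq_comp]
  have h1 : DifferentiableAt ℝ (fderiv ℝ f) x :=
    (hf.fderiv_right (m := 1) (by norm_num)).differentiable (by norm_num) x
  have := (((ContinuousLinearMap.apply ℝ E (Pi.single i (1:ℝ))).hasFDerivAt.comp x
    h1.hasFDerivAt)).fderiv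
  exact this

lemma pd_pd (f : (Fin d → ℝ) → E) (hf : ContDiff ℝ 2 f) (i j : Fin d) (x : Fin d → ℝ) :
    pd i (pd j f) x = fderiv ℝ (fderiv ℝ f) x (Pi.single i 1) (Pi.single j 1) := by
  show fderiv ℝ (pd j f) x (Pi.single i 1) = _
  rw [pd_fderiv_pt hf j x]
  rfl

lemma pd_pd_comm {f : (Fin d → ℝ) → E} (hf : ContDiff ℝ 2 f) (i j : Fin d) :
    pd i (pd j f) = pd j (pd i f) := by
  funext x
  rw [pd_pd f hf i j x, pd_pd f hf j i x, second_deriv f hf]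

lemma mdL_perm {f : (Fin d → ℝ) → E} {l₁ l₂ : List (Fin d)} (hp : l₁.Perm l₂) :
    ∀ {n : ℕ}, ContDiff ℝ (n : ℕ) f → l₁.length ≤ n → mdL l₁ f = mdL l₂ f := by
  induction hp with
  | nil => intro n _ _; rfl
  | cons x hp ih =>
      intro n hf hl
      show pd x (mdL _ f) = pd x (mdL _ f)
      rw [ih hf (le_trans (Nat.le_succ _) hl)]
  | swap i j l =>
      intro n hf hl
      show pd j (pd i (mdL l f)) = pd i (pd j (mdL l f))
      apply pd_pd_comm
      have h2 : ContDiff ℝ ((2:ℕ) : WithTop ℕ∞) (mdL l f) := by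
        apply mdL_contDiff
        apply hf.of_le
        exact_mod_cast (by simp [List.length_cons] at hl; omega : l.length + 2 ≤ n)
      exact_mod_cast h2
  | trans hp1 hp2 ih1 ih2 =>
      intro n hf hl
      rw [ih1 hf hl, ih2 hf (hp1.length_eq ▸ hl)]

lemma pd_clm (L : E →L[ℝ] F) {f : (Fin d → ℝ) → E} (hf : Differentiable ℝ f) (i : Fin d) :
    pd i (fun x => L (f x)) = fun x => L (pd i f x) := by
  funext x
  show fderiv ℝ (fun x => L (f x)) x (Pi.single i 1) = _
  have : fderiv ℝ (fun x => L (f x)) x = L.comp (fderiv ℝ f x) := by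
    have := (L.hasFDerivAt.comp x (hf x).hasFDerivAt).fderiv
    rw [← this]
    rfl
  rw [this]
  rfl

lemma mdL_clm (L : E →L[ℝ] F) {f : (Fin d → ℝ) → E} : ∀ (l : List (Fin d)) {n : ℕ},
    ContDiff ℝ (n : ℕ) f → l.length ≤ n →
    mdL l (fun x => L (f x)) = fun x => L (mdL l f x) := by
  intro l
  induction l with
  | nil => intro n _ _; rfl
  | cons i l ih =>
      intro n hf hl
      show pd i (mdL l fun x => L (f x)) = _
      rw [ih hf (le_trans (Nat.le_succ _) hl)]
      apply pd_clm
      have h2 : ContDiff ℝ ((1:ℕ) : WithTop ℕ∞) (mdL l f) := by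
        apply mdL_contDiff
        apply hf.of_le
        exact_mod_cast (by simpa [List.length_cons] using hl : l.length + 1 ≤ n)
      exact h2.differentiable (by norm_num)

lemma clm_norm_le (L : (Fin d → ℝ) →L[ℝ] E) : ‖L‖ ≤ ∑ i, ‖L (Pi.single i 1)‖ := by
  apply ContinuousLinearMap.opNorm_le_bound
  · positivity
  intro v
  have hv : v = ∑ i, v i • (Pi.single i (1:ℝ) : Fin d → ℝ) := by
    funext j
    simp [Finset.sum_apply, Pi.single_apply]
  calc ‖L v‖ = ‖∑ i, v i • L (Pi.single i 1)‖ := by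
        conv_lhs => rw [hv]
        rw [map_sum]
        simp [_root_.map_smul]
    _ ≤ ∑ i, ‖v i • L (Pi.single i 1)‖ := norm_sum_le _ _
    _ ≤ ∑ i, ‖L (Pi.single i 1)‖ * ‖v‖ := by
        apply Finset.sum_le_sum
        intro i _
        rw [norm_smul]
        calc ‖v i‖ * ‖L (Pi.single i 1)‖ ≤ ‖v‖ * ‖L (Pi.single i 1)‖ := by
              apply mul_le_mul_of_nonneg_right (norm_le_pi_norm v i) (norm_nonneg _)
          _ = ‖L (Pi.single i 1)‖ * ‖v‖ := mul_comm _ _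
    _ = (∑ i, ‖L (Pi.single i 1)‖) * ‖v‖ := by rw [Finset.sum_mul]

lemma pd_fderiv_comm {f : (Fin d → ℝ) → E} (hf : ContDiff ℝ 2 f) (i : Fin d) :
    pd i (fderiv ℝ f) = fun x => fderiv ℝ (pd i f) x := by
  funext x
  rw [pd_fderiv_pt hf i x]
  show fderiv ℝ (fderiv ℝ f) x (Pi.single i 1) = _
  ext v
  show fderiv ℝ (fderiv ℝ f) x (Pi.single i 1) v = fderiv ℝ (fderiv ℝ f) x v (Pi.single i 1)
  exact second_deriv f hf x _ _


/-- All partial derivatives up to order `n` exist and are globally bounded. -/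
def Good (n : ℕ) (f : (Fin d → ℝ) → E) : Prop :=
  ContDiff ℝ (n : ℕ) f ∧
    ∀ l : List (Fin d), l.length ≤ n → ∃ B : ℝ, 0 ≤ B ∧ ∀ x, ‖mdL l f x‖ ≤ B

lemma Good.mono {n k : ℕ} {f : (Fin d → ℝ) → E} (hf : Good n f) (hk : k ≤ n) : Good k f := by
  refine ⟨hf.1.of_le (by exact_mod_cast hk), fun l hl => hf.2 l (le_trans hl hk)⟩

lemma Good.mdL_good {n k : ℕ} {f : (Fin d → ℝ) → E} (hf : Good n f) (l : List (Fin d))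
    (hkl : l.length + k ≤ n) : Good k (mdL l f) := by
  constructor
  · exact mdL_contDiff l (hf.1.of_le (by exact_mod_cast hkl))
  · intro l' hl'
    rw [← mdL_append]
    apply hf.2
    simp only [List.length_append]
    omega

lemma Good.bound0 {n : ℕ} {f : (Fin d → ℝ) → E} (hf : Good n f) :
    ∃ B : ℝ, 0 ≤ B ∧ ∀ x, ‖f x‖ ≤ B := hf.2 [] (by simp)

lemma mdL_fderiv_comm {f : (Fin d → ℝ) → E} : ∀ (l : List (Fin d)),
    ContDiff ℝ (l.length + 1 : ℕ) f →
    mdL l (fderiv ℝ f) = fun x => fderiv ℝ (mdL l f) x := by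
  intro l
  induction l with
  | nil => intro _; rfl
  | cons i l ih =>
      intro hf
      show pd i (mdL l (fderiv ℝ f)) = _
      have hle : ContDiff ℝ (l.length + 1 : ℕ) f := hf.of_le (by exact_mod_cast (by simp [List.length_cons] : l.length + 1 ≤ (i :: l).length + 1))
      rw [ih hle]
      have h2 : ContDiff ℝ ((2:ℕ) : WithTop ℕ∞) (mdL l f) := by
        apply mdL_contDiff
        apply hf.of_le
        exact_mod_cast (by simp [List.length_cons] : l.length + 2 ≤ (i :: l).length + 1)
      exact pd_fderiv_comm (by exact_mod_cast h2) i

lemma Good.fderiv_bound {n : ℕ} {f : (Fin d → ℝ) → E} (hf : Good (n + 1) f) :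
    ∃ B : ℝ, 0 ≤ B ∧ ∀ x, ‖fderiv ℝ f x‖ ≤ B := by
  have hi : ∀ i : Fin d, ∃ B : ℝ, 0 ≤ B ∧ ∀ x, ‖mdL [i] f x‖ ≤ B :=
    fun i => hf.2 [i] (by simp)
  choose B hB0 hB using hi
  refine ⟨∑ i, B i, Finset.sum_nonneg fun i _ => hB0 i, fun x => ?_⟩
  calc ‖fderiv ℝ f x‖ ≤ ∑ i, ‖fderiv ℝ f x (Pi.single i 1)‖ := clm_norm_le _
    _ ≤ ∑ i, B i := Finset.sum_le_sum fun i _ => hB i x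

lemma Good.fderiv_good {n : ℕ} {f : (Fin d → ℝ) → E} (hf : Good (n + 1) f) :
    Good n (fderiv ℝ f) := by
  constructor
  · exact hf.1.fderiv_right (by exact_mod_cast le_refl (n+1))
  · intro l hl
    rw [mdL_fderiv_comm l (hf.1.of_le (by exact_mod_cast by omega))]
    have hi : ∀ i : Fin d, ∃ B : ℝ, 0 ≤ B ∧ ∀ x, ‖mdL (i :: l) f x‖ ≤ B :=
      fun i => hf.2 (i :: l) (by simp [List.length_cons]; omega)
    choose B hB0 hB using hi
    refine ⟨∑ i, B i, Finset.sum_nonneg fun i _ => hB0 i, fun x => ?_⟩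
    calc ‖fderiv ℝ (mdL l f) x‖ ≤ ∑ i, ‖fderiv ℝ (mdL l f) x (Pi.single i 1)‖ := clm_norm_le _
      _ ≤ ∑ i, B i := Finset.sum_le_sum fun i _ => hB i x

section conv
variable [CompleteSpace E] {h : (Fin d → ℝ) → ℝ}

/-- convolution of a vector valued function with a scalar weight -/
def cv (f : (Fin d → ℝ) → E) (h : (Fin d → ℝ) → ℝ) : (Fin d → ℝ) → E :=
  fun x => ∫ y, h y • f (x - y)

lemma cv_integrand_integrable (hh : Continuous h) (hhi : Integrable h)
    {f : (Fin d → ℝ) → E} (hfc : Continuous f) {B : ℝ} (hB : ∀ x, ‖f x‖ ≤ B) (x : Fin d → ℝ) :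
    Integrable (fun y => h y • f (x - y)) := by
  apply Integrable.mono' ((hhi.norm).const_mul B)
  · exact (hh.aestronglyMeasurable).smul
      ((hfc.comp (continuous_const.sub continuous_id)).aestronglyMeasurable)
  · refine Filter.Eventually.of_forall fun y => ?_
    rw [norm_smul]
    calc ‖h y‖ * ‖f (x - y)‖ ≤ ‖h y‖ * B :=
          mul_le_mul_of_nonneg_left (hB _) (norm_nonneg _)
      _ = B * ‖h y‖ := mul_comm _ _

lemma cv_norm_le (hh : Continuous h) (hhi : Integrable h)
    {f : (Fin d → ℝ) → E} (hfc : Continuous f) {B : ℝ} (hB : ∀ x, ‖f x‖ ≤ B) (x : Fin d → ℝ) :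
    ‖cv f h x‖ ≤ B * ∫ y, |h y| := by
  calc ‖cv f h x‖ ≤ ∫ y, ‖h y • f (x - y)‖ := norm_integral_le_integral_norm _
    _ ≤ ∫ y, B * |h y| := by
        apply integral_mono (cv_integrand_integrable hh hhi hfc hB x).norm
          (hhi.abs.const_mul B)
        intro y
        show ‖h y • f (x - y)‖ ≤ B * |h y|
        rw [norm_smul]
        calc ‖h y‖ * ‖f (x - y)‖ ≤ ‖h y‖ * B :=
              mul_le_mul_of_nonneg_left (hB _) (norm_nonneg _)
          _ = B * |h y| := by rw [Real.norm_eq_abs]; ring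
    _ = B * ∫ y, |h y| := integral_const_mul _ _

lemma cv_hasFDerivAt (hh : Continuous h) (hhi : Integrable h)
    {f : (Fin d → ℝ) → E} (hf : Good 1 f) (x₀ : Fin d → ℝ) :
    HasFDerivAt (cv f h) (∫ y, h y • fderiv ℝ f (x₀ - y)) x₀ := by
  obtain ⟨B, hB0, hB⟩ := hf.bound0
  obtain ⟨B₁, hB₁0, hB₁⟩ := Good.fderiv_bound (n := 0) hf
  have hfc : Continuous f := hf.1.continuous
  have hf1 : Differentiable ℝ f := hf.1.differentiable (by norm_num)
  have hfd : Continuous (fderiv ℝ f) := hf.1.continuous_fderiv (by norm_num)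
  apply hasFDerivAt_integral_of_dominated_of_fderiv_le (𝕜 := ℝ)
    (F' := fun x y => h y • fderiv ℝ f (x - y)) (bound := fun y => B₁ * |h y|)
    (s := Metric.ball x₀ 1) (Metric.ball_mem_nhds x₀ one_pos)
  · exact Filter.Eventually.of_forall fun x =>
      (hh.aestronglyMeasurable).smul
        ((hfc.comp (continuous_const.sub continuous_id)).aestronglyMeasurable)
  · exact cv_integrand_integrable hh hhi hfc hB x₀
  · exact (hh.aestronglyMeasurable).smul
      ((hfd.comp (continuous_const.sub continuous_id)).aestronglyMeasurable)
  · refine Filter.Eventually.of_forall fun y => fun x _ => ?_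
    rw [norm_smul (h y) (fderiv ℝ f (x - y))]
    calc ‖h y‖ * ‖fderiv ℝ f (x - y)‖ ≤ ‖h y‖ * B₁ :=
          mul_le_mul_of_nonneg_left (hB₁ _) (norm_nonneg _)
      _ = B₁ * |h y| := by rw [Real.norm_eq_abs]; ring
  · exact hhi.abs.const_mul B₁
  · refine Filter.Eventually.of_forall fun y => fun x _ => ?_
    have h1 : HasFDerivAt (fun x => f (x - y)) (fderiv ℝ f (x - y)) x := by
      have := (hf1 (x - y)).hasFDerivAt.comp x ((hasFDerivAt_id x).sub_const y)
      exact this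
    exact h1.const_smul (h y)

lemma cv_fderiv (hh : Continuous h) (hhi : Integrable h)
    {f : (Fin d → ℝ) → E} (hf : Good 1 f) (x : Fin d → ℝ) :
    fderiv ℝ (cv f h) x = ∫ y, h y • fderiv ℝ f (x - y) :=
  (cv_hasFDerivAt hh hhi hf x).fderiv

lemma cv_pd (hh : Continuous h) (hhi : Integrable h)
    {f : (Fin d → ℝ) → E} (hf : Good 1 f) (i : Fin d) :
    pd i (cv f h) = cv (pd i f) h := by
  funext x
  obtain ⟨B₁, hB₁0, hB₁⟩ := Good.fderiv_bound (n := 0) hf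
  have hfd : Continuous (fderiv ℝ f) := hf.1.continuous_fderiv (by norm_num)
  show fderiv ℝ (cv f h) x (Pi.single i 1) = _
  rw [cv_fderiv hh hhi hf x]
  rw [ContinuousLinearMap.integral_apply (cv_integrand_integrable hh hhi hfd hB₁ x)]
  rfl

lemma cv_continuous (hh : Continuous h) (hhi : Integrable h)
    {f : (Fin d → ℝ) → E} (hfc : Continuous f) {B : ℝ} (hB : ∀ x, ‖f x‖ ≤ B) :
    Continuous (cv f h) := by
  apply continuous_of_dominated (bound := fun y => B * |h y|)
  · exact fun x => (hh.aestronglyMeasurable).smul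
      ((hfc.comp (continuous_const.sub continuous_id)).aestronglyMeasurable)
  · refine fun x => Filter.Eventually.of_forall fun y => ?_
    rw [norm_smul]
    calc ‖h y‖ * ‖f (x - y)‖ ≤ ‖h y‖ * B :=
          mul_le_mul_of_nonneg_left (hB _) (norm_nonneg _)
      _ = B * |h y| := by rw [Real.norm_eq_abs]; ring
  · exact hhi.abs.const_mul B
  · exact Filter.Eventually.of_forall fun y =>
      continuous_const.smul (hfc.comp (continuous_id.sub continuous_const))

end conv

lemma cv_contDiff {d : ℕ} {h : (Fin d → ℝ) → ℝ} (hh : Continuous h) (hhi : Integrable h) :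
    ∀ (n : ℕ) {E : Type} [NormedAddCommGroup E] [NormedSpace ℝ E] [CompleteSpace E]
      (f : (Fin d → ℝ) → E), Good n f → ContDiff ℝ (n : ℕ) (cv f h)
  | 0, E, _, _, _, f, hf => by
      obtain ⟨B, hB0, hB⟩ := hf.bound0
      exact_mod_cast contDiff_zero.2 (cv_continuous hh hhi hf.1.continuous hB)
  | (n+1), E, _, _, _, f, hf => by
      have hg1 : Good 1 f := hf.mono (by omega)
      have hdiff : Differentiable ℝ (cv f h) :=
        fun x => (cv_hasFDerivAt hh hhi hg1 x).differentiableAt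
      have hfe : fderiv ℝ (cv f h) = cv (fderiv ℝ f) h := by
        funext x
        exact cv_fderiv hh hhi hg1 x
      have : ((n+1 : ℕ) : WithTop ℕ∞) = (n : WithTop ℕ∞) + 1 := by push_cast; ring
      rw [this, contDiff_succ_iff_fderiv]
      refine ⟨hdiff, by simp, ?_⟩
      rw [hfe]
      exact cv_contDiff hh hhi n (fderiv ℝ f) hf.fderiv_good

lemma cv_mdL {d : ℕ} {E : Type} [NormedAddCommGroup E] [NormedSpace ℝ E] [CompleteSpace E]
    {h : (Fin d → ℝ) → ℝ} (hh : Continuous h) (hhi : Integrable h) {n : ℕ}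
    {f : (Fin d → ℝ) → E} (hf : Good n f) :
    ∀ (l : List (Fin d)), l.length ≤ n → mdL l (cv f h) = cv (mdL l f) h := by
  intro l
  induction l with
  | nil => intro _; rfl
  | cons i l ih =>
      intro hl
      show pd i (mdL l (cv f h)) = _
      rw [ih (by simp [List.length_cons] at hl; omega)]
      exact cv_pd hh hhi (hf.mdL_good l (by simp [List.length_cons] at hl; omega)) i

lemma mdL_eq_md_count {n : ℕ} {f : (Fin d → ℝ) → E} (l : List (Fin d))
    (hf : ContDiff ℝ (n : ℕ) f) (hl : l.length ≤ n) :
    mdL l f = md (fun i => l.count i) f := by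
  rw [md_eq_mdL]
  exact (mdL_perm (perm_listOf_count l) hf hl).symm ▸ rfl

lemma md_zero (f : (Fin d → ℝ) → E) : md (fun _ => 0) f = f := by
  show (List.finRange d).foldr (fun i g => (pd i)^[0] g) f = f
  induction List.finRange d with
  | nil => rfl
  | cons i l ih => simpa using ih

lemma pd_mul (i : Fin d) (a b : (Fin d → ℝ) → ℂ) (x : Fin d → ℝ)
    (ha : DifferentiableAt ℝ a x) (hb : DifferentiableAt ℝ b x) :
    pd i (fun y => a y * b y) x = a x * pd i b x + b x * pd i a x := by
  show fderiv ℝ (fun y => a y * b y) x (Pi.single i 1) = _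
  rw [fderiv_fun_mul ha hb]
  simp only [ContinuousLinearMap.add_apply, ContinuousLinearMap.smul_apply, smul_eq_mul]
  rfl

lemma pd_sum {ι : Type*} (i : Fin d) (s : Finset ι) (f : ι → (Fin d → ℝ) → ℂ) (x : Fin d → ℝ)
    (hf : ∀ j ∈ s, DifferentiableAt ℝ (f j) x) :
    pd i (fun y => ∑ j ∈ s, f j y) x = ∑ j ∈ s, pd i (f j) x := by
  show fderiv ℝ (fun y => ∑ j ∈ s, f j y) x (Pi.single i 1) = _
  rw [fderiv_fun_sum hf]
  simp [pd]

/-- Leibniz rule, in representation form. -/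
lemma leibniz {n : ℕ} (g u : (Fin d → ℝ) → ℂ) (hg : ContDiff ℝ (n : ℕ) g)
    (hu : ContDiff ℝ (n : ℕ) u) :
    ∀ (l : List (Fin d)), l.length ≤ n →
    ∃ (k : ℕ) (a b : Fin k → List (Fin d)), (k : ℝ) ≤ 2 ^ l.length ∧
      (∀ j, (a j).Sublist l ∧ (b j).Sublist l) ∧
      mdL l (fun x => g x * u x) = fun x => ∑ j, mdL (a j) g x * mdL (b j) u x := by
  intro l
  induction l with
  | nil =>
      intro _
      refine ⟨1, fun _ => [], fun _ => [], by norm_num, fun j => ⟨List.Sublist.refl _, List.Sublist.refl _⟩, ?_⟩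
      funext x
      simp
  | cons i l ih =>
      intro hl
      have hl' : l.length ≤ n := le_trans (Nat.le_succ _) hl
      obtain ⟨k, a, b, hk, hab, heq⟩ := ih hl'
      have hdiff : ∀ (s : List (Fin d)) (v : (Fin d → ℝ) → ℂ), ContDiff ℝ (n : ℕ) v →
          s.Sublist l → Differentiable ℝ (mdL s v) := by
        intro s v hv hs
        have h1 : ContDiff ℝ ((1:ℕ) : WithTop ℕ∞) (mdL s v) := by
          apply mdL_contDiff
          apply hv.of_le
          have : s.length + 1 ≤ n := by
            have := hs.length_le
            simp [List.length_cons] at hl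
            omega
          exact_mod_cast this
        exact h1.differentiable (by norm_num)
      refine ⟨k + k, Fin.append a (fun j => i :: a j), Fin.append (fun j => i :: b j) b,
        ?_, ?_, ?_⟩
      · push_cast
        have : (2:ℝ) ^ (i :: l).length = 2 ^ l.length + 2 ^ l.length := by
          simp [List.length_cons, pow_succ]; ring
        rw [this]
        exact add_le_add hk hk
      · intro j
        refine Fin.addCases (motive := fun j =>
            ((Fin.append a (fun j => i :: a j)) j).Sublist (i :: l) ∧
            ((Fin.append (fun j => i :: b j) b) j).Sublist (i :: l)) ?_ ?_ j
        · intro j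
          rw [Fin.append_left, Fin.append_left]
          exact ⟨(hab j).1.cons i, (hab j).2.cons₂ i⟩
        · intro j
          rw [Fin.append_right, Fin.append_right]
          exact ⟨(hab j).1.cons₂ i, (hab j).2.cons i⟩
      · funext x
        have hstep : mdL (i :: l) (fun x => g x * u x) x
            = pd i (fun x => ∑ j, mdL (a j) g x * mdL (b j) u x) x := by
          rw [mdL_cons, heq]
        rw [hstep]
        rw [pd_sum i Finset.univ (fun j => fun y => mdL (a j) g y * mdL (b j) u y) x
          (fun j _ => ((hdiff (a j) g hg (hab j).1) x).mul ((hdiff (b j) u hu (hab j).2) x))]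
        have hterm : ∀ j : Fin k,
            pd i (fun y => mdL (a j) g y * mdL (b j) u y) x
              = mdL (a j) g x * mdL (i :: b j) u x + mdL (i :: a j) g x * mdL (b j) u x := by
          intro j
          rw [pd_mul i _ _ x ((hdiff (a j) g hg (hab j).1) x) ((hdiff (b j) u hu (hab j).2) x)]
          rw [mdL_cons, mdL_cons]
          ring
        rw [Finset.sum_congr rfl (fun j _ => hterm j), Finset.sum_add_distrib]
        rw [Fin.sum_univ_add]
        congr 1
        · apply Finset.sum_congr rfl
          intro j _
          rw [Fin.append_left, Fin.append_left]
        · apply Finset.sum_congr rfl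
          intro j _
          rw [Fin.append_right, Fin.append_right]


lemma l2norm_nonneg (f : (Fin d → ℝ) → E) : 0 ≤ l2norm f := ENNReal.toReal_nonneg

lemma hnorm_nonneg (m : ℕ) (f : (Fin d → ℝ) → E) : 0 ≤ hnorm d m f := Real.sqrt_nonneg _

lemma integrable_normsq {u : (Fin d → ℝ) → ℂ} (hu2 : MemLp u 2 (volume : Measure (Fin d → ℝ))) :
    Integrable (fun y => ‖u y‖ ^ 2) (volume : Measure (Fin d → ℝ)) := by
  have h := hu2.integrable_norm_rpow (by norm_num) (by norm_num)
  refine h.congr (Filter.Eventually.of_forall fun a => ?_)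
  show ‖u a‖ ^ (2:ℝ≥0∞).toReal = ‖u a‖ ^ 2
  rw [ENNReal.toReal_ofNat, ← Real.rpow_natCast ‖u a‖ 2]
  norm_num

lemma l2_sq_eq {u : (Fin d → ℝ) → ℂ} (hu2 : MemLp u 2 (volume : Measure (Fin d → ℝ))) :
    ∫ y, ‖u y‖ ^ 2 = l2norm u ^ 2 := by
  have h1 := hu2.eLpNorm_eq_integral_rpow_norm (by norm_num) (by norm_num)
  have h2 : (2 : ℝ≥0∞).toReal = 2 := by norm_num
  rw [h2] at h1
  have hnn : 0 ≤ ∫ a, ‖u a‖ ^ (2:ℝ) :=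
    integral_nonneg (fun a => Real.rpow_nonneg (norm_nonneg _) _)
  have h3 : l2norm u = (∫ a, ‖u a‖ ^ (2:ℝ)) ^ ((2:ℝ))⁻¹ := by
    rw [show l2norm u = (eLpNorm u 2 volume).toReal from rfl, h1,
      ENNReal.toReal_ofReal (Real.rpow_nonneg hnn _)]
  rw [h3, ← Real.rpow_natCast ((∫ a, ‖u a‖ ^ (2:ℝ)) ^ ((2:ℝ))⁻¹) 2, ← Real.rpow_mul hnn]
  norm_num

lemma l2_le_hnorm {m : ℕ} (u : (Fin d → ℝ) → ℂ) (β : Fin d → ℕ) (hβ : (∑ i, β i) ≤ m) :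
    l2norm (md β u) ≤ hnorm d m u := by
  have hlt : ∀ i, β i < m + 1 := fun i => by
    have h := Finset.single_le_sum (f := β) (fun _ _ => Nat.zero_le _) (Finset.mem_univ i)
    omega
  have hterm : l2norm (md β u) ^ 2 ≤ ∑ α' : Fin d → Fin (m + 1),
      (if (∑ i, ((α' i : ℕ))) ≤ m then l2norm (md (fun i => ((α' i : ℕ))) u) ^ 2 else 0) := by
    have h := Finset.single_le_sum (f := fun α' : Fin d → Fin (m+1) =>
        if (∑ i, ((α' i : ℕ))) ≤ m then l2norm (md (fun i => ((α' i : ℕ))) u) ^ 2 else 0)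
      (fun a _ => by split <;> positivity)
      (Finset.mem_univ (fun i => (⟨β i, hlt i⟩ : Fin (m+1))))
    dsimp only at h
    rw [if_pos hβ] at h
    exact h
  calc l2norm (md β u) = Real.sqrt (l2norm (md β u) ^ 2) :=
        (Real.sqrt_sq (l2norm_nonneg _)).symm
    _ ≤ hnorm d m u := Real.sqrt_le_sqrt hterm

end
end S3aux

theorem statement3 (d m : ℕ) (hd : 1 ≤ d) (V : (Fin d → ℝ) → ℝ)
    (hV : ContDiffBdd d m V) :
    ∃ C : ℝ, 0 < C ∧ ∀ u : (Fin d → ℝ) → ℂ, ContDiffL2 d m u →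
      ContDiffL2 d m (fun x => ((∫ y, V (x - y) * ‖u y‖ ^ 2 : ℝ) : ℂ) * u x) ∧
      hnorm d m (fun x => ((∫ y, V (x - y) * ‖u y‖ ^ 2 : ℝ) : ℂ) * u x)
        ≤ C * l2norm u ^ 2 * hnorm d m u := by
  classical
  obtain ⟨hV1, hV2⟩ := hV
  -- a uniform bound for all partial derivatives of V of order at most m
  have hex : ∀ α : Fin d → Fin (m+1), ∃ B : ℝ,
      (∑ i, ((α i : ℕ))) ≤ m → ∀ x, ‖md (fun i => ((α i : ℕ))) V x‖ ≤ B := by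
    intro α
    by_cases hα : (∑ i, ((α i : ℕ))) ≤ m
    · obtain ⟨B, hB⟩ := hV2 _ hα
      exact ⟨B, fun _ => hB⟩
    · exact ⟨0, fun hc => absurd hc hα⟩
  choose Bf hBf using hex
  set B : ℝ := 1 + ∑ α : Fin d → Fin (m+1), |Bf α| with hBdef
  have hB1 : (1:ℝ) ≤ B :=
    le_add_of_nonneg_right (Finset.sum_nonneg fun _ _ => abs_nonneg _)
  have hB0 : (0:ℝ) ≤ B := le_trans zero_le_one hB1
  have hBpos : (0:ℝ) < B := lt_of_lt_of_le one_pos hB1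
  have hVmd : ∀ l : List (Fin d), l.length ≤ m → ∀ x, ‖S3aux.mdL l V x‖ ≤ B := by
    intro l hl x
    have hcnt : (∑ i, l.count i) ≤ m := by rw [S3aux.sum_count]; exact hl
    have hlt : ∀ i, l.count i < m + 1 := fun i => by
      have h : l.count i ≤ ∑ i', l.count i' :=
        Finset.single_le_sum (f := fun i' => l.count i') (fun _ _ => Nat.zero_le _)
          (Finset.mem_univ i)
      omega
    rw [S3aux.mdL_eq_md_count l hV1 hl]
    have hb : ‖md (fun i => l.count i) V x‖ ≤ Bf (fun i => ⟨l.count i, hlt i⟩) := by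
      have := hBf (fun i => ⟨l.count i, hlt i⟩) hcnt x
      exact this
    calc ‖md (fun i => l.count i) V x‖ ≤ Bf (fun i => ⟨l.count i, hlt i⟩) := hb
      _ ≤ |Bf (fun i => ⟨l.count i, hlt i⟩)| := le_abs_self _
      _ ≤ ∑ α : Fin d → Fin (m+1), |Bf α| :=
          Finset.single_le_sum (f := fun α => |Bf α|) (fun _ _ => abs_nonneg _)
            (Finset.mem_univ _)
      _ ≤ B := by rw [hBdef]; linarith
  set Vc : (Fin d → ℝ) → ℂ := fun x => ((V x : ℝ) : ℂ) with hVcdef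
  have hVc1 : ContDiff ℝ (m : ℕ) Vc := Complex.ofRealCLM.contDiff.comp hV1
  have hVcmd : ∀ l : List (Fin d), l.length ≤ m → ∀ x, ‖S3aux.mdL l Vc x‖ ≤ B := by
    intro l hl x
    have hclm := S3aux.mdL_clm (L := Complex.ofRealCLM) (f := V) l hV1 hl
    have : S3aux.mdL l Vc = fun x => Complex.ofRealCLM (S3aux.mdL l V x) := hclm
    rw [this]
    simpa using hVmd l hl x
  have hVcgood : S3aux.Good m Vc :=
    ⟨hVc1, fun l hl => ⟨B, hB0, hVcmd l hl⟩⟩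
  refine ⟨Real.sqrt (((m:ℝ)+1)^d) * (2^m * B), by positivity, ?_⟩
  intro u hu
  obtain ⟨hu1, hu2'⟩ := hu
  have huL2 : MemLp u 2 (volume : Measure (Fin d → ℝ)) := by
    have h := hu2' (fun _ => 0) (by simp)
    rwa [S3aux.md_zero] at h
  have hhc : Continuous (fun y => ‖u y‖ ^ 2) := (hu1.continuous.norm).pow 2
  have hhi : Integrable (fun y => ‖u y‖ ^ 2) (volume : Measure (Fin d → ℝ)) :=
    S3aux.integrable_normsq huL2
  have hI : (∫ y, |‖u y‖ ^ 2|) = l2norm u ^ 2 := by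
    rw [show (fun y => |‖u y‖ ^ 2|) = fun y => ‖u y‖ ^ 2 from
      funext fun y => abs_of_nonneg (by positivity)]
    exact S3aux.l2_sq_eq huL2
  set g : (Fin d → ℝ) → ℂ := S3aux.cv Vc (fun y => ‖u y‖ ^ 2) with hgdef
  have hgc : ContDiff ℝ (m:ℕ) g := S3aux.cv_contDiff hhc hhi m Vc hVcgood
  have hΨ : (fun x => ((∫ y, V (x - y) * ‖u y‖ ^ 2 : ℝ) : ℂ) * u x) = fun x => g x * u x := by
    funext x
    congr 1
    rw [hgdef]
    show _ = ∫ y, (‖u y‖ ^ 2 : ℝ) • Vc (x - y)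
    have h1 : ∫ y, (‖u y‖ ^ 2 : ℝ) • Vc (x - y)
        = ∫ y, ((V (x - y) * ‖u y‖ ^ 2 : ℝ) : ℂ) := by
      apply integral_congr_ae
      refine Filter.Eventually.of_forall fun y => ?_
      show (‖u y‖ ^ 2 : ℝ) • Vc (x - y) = ((V (x - y) * ‖u y‖ ^ 2 : ℝ) : ℂ)
      rw [hVcdef]
      rw [Complex.real_smul, Complex.ofReal_mul]
      ring
    rw [h1]
    exact (integral_ofReal (𝕜 := ℂ)).symm
  rw [hΨ]
  -- key estimate for every multi-index
  have hkey : ∀ β : Fin d → ℕ, (∑ i, β i) ≤ m →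
      MemLp (md β (fun x => g x * u x)) 2 (volume : Measure (Fin d → ℝ)) ∧
      l2norm (md β (fun x => g x * u x)) ≤ 2^m * B * (l2norm u ^ 2) * hnorm d m u := by
    intro β hβ
    have hlen : (S3aux.listOf β).length ≤ m := by rw [S3aux.length_listOf]; exact hβ
    obtain ⟨k, a, b, hk, hab, heq⟩ := S3aux.leibniz g u hgc hu1 (S3aux.listOf β) hlen
    have hmd : md β (fun x => g x * u x)
        = fun x => ∑ j, S3aux.mdL (a j) g x * S3aux.mdL (b j) u x := by
      rw [S3aux.md_eq_mdL]; exact heq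
    have hsub : ∀ j, (a j).length ≤ m ∧ (b j).length ≤ m := fun j =>
      ⟨le_trans (hab j).1.length_le hlen, le_trans (hab j).2.length_le hlen⟩
    have hGeq : ∀ j, S3aux.mdL (a j) g = S3aux.cv (S3aux.mdL (a j) Vc) (fun y => ‖u y‖ ^ 2) :=
      fun j => S3aux.cv_mdL hhc hhi hVcgood (a j) (hsub j).1
    have hVcc : ∀ j, Continuous (S3aux.mdL (a j) Vc) := fun j =>
      (S3aux.mdL_contDiff (n := 0) (a j)
        (hVc1.of_le (by exact_mod_cast by simpa using (hsub j).1))).continuous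
    have hGbd : ∀ j, ∀ x, ‖S3aux.mdL (a j) g x‖ ≤ B * (l2norm u ^ 2) := by
      intro j x
      rw [hGeq j, ← hI]
      exact S3aux.cv_norm_le hhc hhi (hVcc j) (hVcmd (a j) (hsub j).1) x
    have hGcont : ∀ j, Continuous (S3aux.mdL (a j) g) := fun j =>
      (S3aux.mdL_contDiff (n := 0) (a j)
        (hgc.of_le (by exact_mod_cast by simpa using (hsub j).1))).continuous
    have hUmem : ∀ j, MemLp (S3aux.mdL (b j) u) 2 (volume : Measure (Fin d → ℝ)) := by
      intro j
      rw [S3aux.mdL_eq_md_count (b j) hu1 (hsub j).2]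
      exact hu2' _ (by rw [S3aux.sum_count]; exact (hsub j).2)
    have hUl2 : ∀ j, l2norm (S3aux.mdL (b j) u) ≤ hnorm d m u := by
      intro j
      rw [S3aux.mdL_eq_md_count (b j) hu1 (hsub j).2]
      exact S3aux.l2_le_hnorm u _ (by rw [S3aux.sum_count]; exact (hsub j).2)
    have hterm : ∀ j, MemLp (fun x => S3aux.mdL (a j) g x * S3aux.mdL (b j) u x) 2
        (volume : Measure (Fin d → ℝ)) := by
      intro j
      have hGtop : MemLp (S3aux.mdL (a j) g) ⊤ (volume : Measure (Fin d → ℝ)) :=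
        memLp_top_of_bound (hGcont j).aestronglyMeasurable _
          (Filter.Eventually.of_forall (hGbd j))
      exact (hUmem j).smul hGtop
    have hmem : MemLp (md β (fun x => g x * u x)) 2 (volume : Measure (Fin d → ℝ)) := by
      rw [hmd]
      exact memLp_finset_sum Finset.univ (fun j _ => hterm j)
    refine ⟨hmem, ?_⟩
    have hK0 : (0:ℝ) ≤ B * (l2norm u ^ 2) :=
      mul_nonneg hB0 (by positivity)
    have h1 : eLpNorm (md β (fun x => g x * u x)) 2 (volume : Measure (Fin d → ℝ))
        ≤ ∑ j : Fin k, ENNReal.ofReal (B * (l2norm u ^ 2)) *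
            eLpNorm (S3aux.mdL (b j) u) 2 (volume : Measure (Fin d → ℝ)) := by
      rw [hmd]
      have hfs : (fun x => ∑ j : Fin k, S3aux.mdL (a j) g x * S3aux.mdL (b j) u x)
          = ∑ j : Fin k, (fun x => S3aux.mdL (a j) g x * S3aux.mdL (b j) u x) := by
        funext x; rw [Finset.sum_apply]
      rw [hfs]
      refine le_trans (eLpNorm_sum_le (fun j _ => (hterm j).1) (by norm_num)) ?_
      apply Finset.sum_le_sum
      intro j _
      calc eLpNorm (fun x => S3aux.mdL (a j) g x * S3aux.mdL (b j) u x) 2 volume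
          ≤ eLpNorm (fun x => (B * (l2norm u ^ 2)) * ‖S3aux.mdL (b j) u x‖) 2 volume := by
            apply eLpNorm_mono_real
            intro x
            rw [norm_mul]
            exact mul_le_mul_of_nonneg_right (hGbd j x) (norm_nonneg _)
        _ = (‖(B * (l2norm u ^ 2))‖₊ : ℝ≥0∞) * eLpNorm (fun x => ‖S3aux.mdL (b j) u x‖) 2 volume := by
            rw [show (fun x => (B * (l2norm u ^ 2)) * ‖S3aux.mdL (b j) u x‖)
              = (B * (l2norm u ^ 2)) • (fun x => ‖S3aux.mdL (b j) u x‖) from rfl]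
            exact eLpNorm_const_smul _ _ _ _
        _ = ENNReal.ofReal (B * (l2norm u ^ 2)) * eLpNorm (S3aux.mdL (b j) u) 2 volume := by
            rw [eLpNorm_norm]
            congr 1
            exact Real.enorm_eq_ofReal hK0
    have hRfin : (∑ j : Fin k, ENNReal.ofReal (B * (l2norm u ^ 2)) *
        eLpNorm (S3aux.mdL (b j) u) 2 (volume : Measure (Fin d → ℝ))) ≠ ⊤ := by
      refine (ENNReal.sum_lt_top.2 fun j _ => ?_).ne
      exact ENNReal.mul_lt_top ENNReal.ofReal_lt_top (hUmem j).2
    calc l2norm (md β (fun x => g x * u x))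
        = (eLpNorm (md β (fun x => g x * u x)) 2 (volume : Measure (Fin d → ℝ))).toReal := rfl
      _ ≤ (∑ j : Fin k, ENNReal.ofReal (B * (l2norm u ^ 2)) *
            eLpNorm (S3aux.mdL (b j) u) 2 (volume : Measure (Fin d → ℝ))).toReal :=
          ENNReal.toReal_mono hRfin h1
      _ = ∑ j : Fin k, (B * (l2norm u ^ 2)) * l2norm (S3aux.mdL (b j) u) := by
          rw [ENNReal.toReal_sum (fun j _ => (ENNReal.mul_lt_top ENNReal.ofReal_lt_top (hUmem j).2).ne)]
          apply Finset.sum_congr rfl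
          intro j _
          rw [ENNReal.toReal_mul, ENNReal.toReal_ofReal hK0]
          rfl
      _ ≤ ∑ _j : Fin k, (B * (l2norm u ^ 2)) * hnorm d m u := by
          apply Finset.sum_le_sum
          intro j _
          exact mul_le_mul_of_nonneg_left (hUl2 j) hK0
      _ = (k:ℝ) * ((B * (l2norm u ^ 2)) * hnorm d m u) := by
          rw [Finset.sum_const, Finset.card_univ, Fintype.card_fin, nsmul_eq_mul]
      _ ≤ (2:ℝ)^m * ((B * (l2norm u ^ 2)) * hnorm d m u) := by
          apply mul_le_mul_of_nonneg_right
          · calc (k:ℝ) ≤ 2 ^ (S3aux.listOf β).length := hk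
              _ ≤ (2:ℝ)^m := by
                apply pow_le_pow_right₀ one_le_two hlen
          · exact mul_nonneg hK0 (S3aux.hnorm_nonneg m u)
      _ = 2^m * B * (l2norm u ^ 2) * hnorm d m u := by ring
  constructor
  · exact ⟨hgc.mul hu1, fun β hβ => (hkey β hβ).1⟩
  · have hD0 : (0:ℝ) ≤ 2^m * B * (l2norm u ^ 2) * hnorm d m u := by
      have := S3aux.hnorm_nonneg (d := d) m u
      have h2 := S3aux.l2norm_nonneg (d := d) u
      positivity
    have hsum : (∑ α : Fin d → Fin (m+1), if (∑ i, ((α i : ℕ))) ≤ m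
          then l2norm (md (fun i => ((α i : ℕ))) (fun x => g x * u x)) ^ 2 else 0)
        ≤ ((m:ℝ)+1)^d * (2^m * B * (l2norm u ^ 2) * hnorm d m u)^2 := by
      calc (∑ α : Fin d → Fin (m+1), if (∑ i, ((α i : ℕ))) ≤ m
            then l2norm (md (fun i => ((α i : ℕ))) (fun x => g x * u x)) ^ 2 else 0)
          ≤ ∑ _α : Fin d → Fin (m+1), (2^m * B * (l2norm u ^ 2) * hnorm d m u)^2 := by
            apply Finset.sum_le_sum
            intro α _
            split
            · next hc =>
                exact pow_le_pow_left₀ (S3aux.l2norm_nonneg _) ((hkey _ hc).2) 2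
            · positivity
        _ = ((m:ℝ)+1)^d * (2^m * B * (l2norm u ^ 2) * hnorm d m u)^2 := by
            rw [Finset.sum_const, Finset.card_univ, nsmul_eq_mul]
            congr 1
            rw [Fintype.card_fun]
            push_cast
            simp
    calc hnorm d m (fun x => g x * u x)
        = Real.sqrt (∑ α : Fin d → Fin (m+1), if (∑ i, ((α i : ℕ))) ≤ m
            then l2norm (md (fun i => ((α i : ℕ))) (fun x => g x * u x)) ^ 2 else 0) := rfl
      _ ≤ Real.sqrt (((m:ℝ)+1)^d * (2^m * B * (l2norm u ^ 2) * hnorm d m u)^2) :=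
          Real.sqrt_le_sqrt hsum
      _ = Real.sqrt (((m:ℝ)+1)^d) * (2^m * B * (l2norm u ^ 2) * hnorm d m u) := by
          rw [Real.sqrt_mul (by positivity), Real.sqrt_sq hD0]
      _ = Real.sqrt (((m:ℝ)+1)^d) * (2^m * B) * l2norm u ^ 2 * hnorm d m u := by ring
end

section
/- Let d ≥ 1, m ∈ ℕ, and let V : ℝ^d → ℝ be of class C^m with all partial derivatives of order ≤ m bounded. There exists a constant C ∈ (0,∞), depending only on m, d, and ‖V‖_{C^m}, such that for all u₁, u₂ : ℝ^d → ℂ of class C^m with all partial derivatives of order ≤ m in L², one has ‖Ψ₀(u₂) − Ψ₀(u₁)‖_{H^m} ≤ C (‖u₁‖_{H^m}² + ‖u₂‖_{H^m}²) ‖u₂ − u₁‖_{H^m}, where Ψ₀(u) = (V ⋆ |u|²)·u. -/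
set_option maxHeartbeats 1000000
set_option synthInstance.maxHeartbeats 400000


open MeasureTheory Filter
open scoped ENNReal NNReal BigOperators Topology

noncomputable section Aux
variable {d : ℕ} {E : Type*} [NormedAddCommGroup E] [NormedSpace ℝ E]

/-- apply `pd` along a list of directions. -/
def mdL (L : List (Fin d)) (f : (Fin d → ℝ) → E) : (Fin d → ℝ) → E :=
  L.foldr (fun i g => pd i g) f

/-- canonical sorted list attached to a multi-index -/
def bigL (α : Fin d → ℕ) : List (Fin d) :=
  (List.finRange d).flatMap (fun i => List.replicate (α i) i)

@[simp] lemma mdL_nil (f : (Fin d → ℝ) → E) : mdL [] f = f := rfl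

@[simp] lemma mdL_cons (i : Fin d) (L : List (Fin d)) (f : (Fin d → ℝ) → E) :
    mdL (i :: L) f = pd i (mdL L f) := rfl

lemma mdL_append (L₁ L₂ : List (Fin d)) (f : (Fin d → ℝ) → E) :
    mdL (L₁ ++ L₂) f = mdL L₁ (mdL L₂ f) := by
  simp [mdL, List.foldr_append]

lemma mdL_replicate (k : ℕ) (i : Fin d) (f : (Fin d → ℝ) → E) :
    mdL (List.replicate k i) f = (pd i)^[k] f := by
  induction k with
  | zero => rfl
  | succ n ih => simp [List.replicate_succ, mdL_cons, ih, Function.iterate_succ_apply']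

lemma md_eq_mdL (α : Fin d → ℕ) (f : (Fin d → ℝ) → E) :
    md α f = mdL (bigL α) f := by
  show (List.finRange d).foldr (fun i g => (pd i)^[α i] g) f = _
  unfold bigL
  induction (List.finRange d) with
  | nil => rfl
  | cons a l ih => simp [List.flatMap_cons, mdL_append, mdL_replicate, ih]

lemma count_flat (α : Fin d → ℕ) (j : Fin d) :
    ∀ l : List (Fin d), l.Nodup → j ∈ l →
      (l.flatMap (fun i => List.replicate (α i) i)).count j = α j := by
  intro l
  induction l with
  | nil => intro _ h; simp at h
  | cons a l ih =>
    intro hnd hj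
    rw [List.flatMap_cons, List.count_append]
    rcases List.nodup_cons.1 hnd with ⟨ha, hl⟩
    by_cases hja : j = a
    · subst hja
      have h1 : (List.replicate (α j) j).count j = α j := by
        simp [List.count_replicate]
      have h2 : (l.flatMap (fun i => List.replicate (α i) i)).count j = 0 := by
        rw [List.count_eq_zero]
        intro hmem
        rcases List.mem_flatMap.1 hmem with ⟨b, hb, hjb⟩
        rw [List.eq_of_mem_replicate hjb] at ha; exact ha hb
      omega
    · have h1 : (List.replicate (α a) a).count j = 0 := by
        rw [List.count_eq_zero]
        intro hmem
        exact hja (List.eq_of_mem_replicate hmem)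
      have hjl : j ∈ l := by
        rcases List.mem_cons.1 hj with h' | h'; exact absurd h' hja; exact h'
      rw [h1, ih hl hjl]
      omega

lemma count_bigL (α : Fin d → ℕ) (j : Fin d) : (bigL α).count j = α j :=
  count_flat α j _ (List.nodup_finRange d) (List.mem_finRange j)

lemma length_bigL (α : Fin d → ℕ) : (bigL α).length = ∑ i, α i := by
  unfold bigL
  rw [List.length_flatMap]
  have : (List.length ∘ fun i => List.replicate (α i) i) = α := by
    funext i; simp
  simp only [List.length_replicate]; rw [Fin.sum_univ_def]

lemma mem_bigL {α : Fin d → ℕ} {j : Fin d} (h : j ∈ bigL α) : 0 < α j := by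
  rcases List.mem_flatMap.1 h with ⟨b, _, hjb⟩
  rcases List.mem_replicate.1 hjb with ⟨hne, rfl⟩
  exact Nat.pos_of_ne_zero fun h0 => hne (by simp [h0])

lemma sorted_bigL (α : Fin d → ℕ) : (bigL α).Pairwise (· ≤ ·) := by
  unfold bigL
  rw [List.flatMap_def, List.pairwise_flatten]
  refine ⟨?_, ?_⟩
  · intro l' hl'
    rcases List.mem_map.1 hl' with ⟨i, _, rfl⟩
    exact List.pairwise_replicate.2 (by simp)
  · have : List.Pairwise (· < ·) (List.finRange d) := List.pairwise_lt_finRange d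
    refine (List.pairwise_map.2 (this.imp ?_))
    intro a b hab x hx y hy
    rw [List.eq_of_mem_replicate hx, List.eq_of_mem_replicate hy]
    exact hab.le

lemma sum_count_eq_length (L : List (Fin d)) : ∑ j, L.count j = L.length := by
  induction L with
  | nil => simp
  | cons a l ih =>
    simp only [List.count_cons]
    rw [Finset.sum_add_distrib, ih]
    simp

lemma mdL_sorted_eq_md {L : List (Fin d)} (hL : L.Pairwise (· ≤ ·)) (f : (Fin d → ℝ) → E) :
    mdL L f = md (fun j => L.count j) f := by
  rw [md_eq_mdL]
  have hperm : List.Perm (bigL (fun j => L.count j)) L := by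
    rw [List.perm_iff_count]
    intro a
    rw [count_bigL]
  have heq : bigL (fun j => L.count j) = L :=
    List.Perm.eq_of_pairwise' (sorted_bigL _) hL hperm
  rw [heq]

end Aux

section Smooth
variable {d : ℕ} {E : Type*} [NormedAddCommGroup E] [NormedSpace ℝ E]

lemma contDiff_pd {n : ℕ} {f : (Fin d → ℝ) → E} (hf : ContDiff ℝ (n + 1 : ℕ) f) (i : Fin d) :
    ContDiff ℝ (n : ℕ) (pd i f) := by
  have h1 : ContDiff ℝ (n : ℕ) (fderiv ℝ f) := by
    apply hf.fderiv_right
    exact_mod_cast le_of_eq (by push_cast; ring)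
  exact h1.clm_apply contDiff_const

lemma contDiff_iterate_pd {n k : ℕ} {f : (Fin d → ℝ) → E} (hf : ContDiff ℝ (n : ℕ) f)
    (i : Fin d) (hk : k ≤ n) : ContDiff ℝ ((n - k : ℕ)) ((pd i)^[k] f) := by
  induction k with
  | zero => simpa using hf
  | succ j ih =>
    have hj : j ≤ n := le_of_lt (Nat.lt_of_succ_le hk)
    have h1 := ih hj
    have heq : (n - j : ℕ) = (n - (j+1)) + 1 := by omega
    rw [heq] at h1
    rw [Function.iterate_succ_apply']
    exact contDiff_pd h1 i

lemma contDiff_mdL {n : ℕ} {f : (Fin d → ℝ) → E} (L : List (Fin d))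
    (hf : ContDiff ℝ (n : ℕ) f) (hL : L.length ≤ n) :
    ContDiff ℝ ((n - L.length : ℕ)) (mdL L f) := by
  induction L with
  | nil => simpa using hf
  | cons a l ih =>
    have hl : l.length ≤ n := by simp at hL; omega
    have h1 := ih hl
    have heq : (n - l.length : ℕ) = (n - (a :: l).length) + 1 := by simp at hL ⊢; omega
    rw [heq] at h1
    exact contDiff_pd h1 a

lemma contDiff_md {n : ℕ} {f : (Fin d → ℝ) → E} (α : Fin d → ℕ)
    (hf : ContDiff ℝ (n : ℕ) f) (hα : ∑ i, α i ≤ n) :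
    ContDiff ℝ ((n - ∑ i, α i : ℕ)) (md α f) := by
  rw [md_eq_mdL]
  have := contDiff_mdL (f := f) (bigL α) hf (by rw [length_bigL]; exact hα)
  rwa [length_bigL] at this

lemma differentiable_md {n : ℕ} {f : (Fin d → ℝ) → E} (α : Fin d → ℕ)
    (hf : ContDiff ℝ (n : ℕ) f) (hα : ∑ i, α i < n) :
    Differentiable ℝ (md α f) := by
  have h := contDiff_md α hf (le_of_lt hα)
  apply h.differentiable
  have : 1 ≤ n - ∑ i, α i := by omega
  exact_mod_cast (show n - ∑ i, α i ≠ 0 by omega)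

lemma continuous_md {n : ℕ} {f : (Fin d → ℝ) → E} (α : Fin d → ℕ)
    (hf : ContDiff ℝ (n : ℕ) f) (hα : ∑ i, α i ≤ n) :
    Continuous (md α f) :=
  (contDiff_md α hf hα).continuous

lemma differentiable_mdL_sorted {n : ℕ} {f : (Fin d → ℝ) → E} {L : List (Fin d)}
    (hL : L.Pairwise (· ≤ ·)) (hf : ContDiff ℝ (n : ℕ) f) (hα : L.length < n) :
    Differentiable ℝ (mdL L f) := by
  rw [mdL_sorted_eq_md hL]
  exact differentiable_md _ hf (by rwa [sum_count_eq_length])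

/-- symmetry of second partial derivatives for C² functions -/
lemma pd_pd_comm {f : (Fin d → ℝ) → E} (hf : ContDiff ℝ 2 f) (a b : Fin d) :
    pd a (pd b f) = pd b (pd a f) := by
  funext x
  have hdf : ContDiff ℝ 1 (fderiv ℝ f) := hf.fderiv_right (by norm_num)
  have hd2 : DifferentiableAt ℝ (fderiv ℝ f) x := hdf.differentiable (by norm_num) x
  have h1 : ∀ v w : Fin d → ℝ,
      fderiv ℝ (fun y => fderiv ℝ f y w) x v = fderiv ℝ (fderiv ℝ f) x v w := by
    intro v w
    rw [fderiv_clm_apply hd2 (differentiableAt_const w)]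
    simp
  have hsymm := second_derivative_symmetric
    (f' := fderiv ℝ f) (f'' := fderiv ℝ (fderiv ℝ f) x)
    (fun y => ((hf.differentiable (by norm_num)) y).hasFDerivAt)
    hd2.hasFDerivAt (Pi.single a 1) (Pi.single b 1)
  show fderiv ℝ (fun y => fderiv ℝ f y (Pi.single b 1)) x (Pi.single a 1)
      = fderiv ℝ (fun y => fderiv ℝ f y (Pi.single a 1)) x (Pi.single b 1)
  rw [h1, h1]
  exact hsymm

end Smooth

section Comm
variable {d : ℕ} {E : Type*} [NormedAddCommGroup E] [NormedSpace ℝ E]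

lemma natCast_le_withTop {a b : ℕ} (h : a ≤ b) :
    (a : WithTop ℕ∞) ≤ (b : WithTop ℕ∞) := by exact_mod_cast h

lemma pd_mdL_orderedInsert {f : (Fin d → ℝ) → E} (j : Fin d) :
    ∀ L : List (Fin d), L.Pairwise (· ≤ ·) → ContDiff ℝ (L.length + 1 : ℕ) f →
      pd j (mdL L f) = mdL (L.orderedInsert (· ≤ ·) j) f := by
  intro L
  induction L with
  | nil => intro _ _; rfl
  | cons i L' ih =>
    intro hs hf
    by_cases hji : j ≤ i
    · rw [List.orderedInsert, if_pos hji]; rfl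
    · have hij : i ≤ j := le_of_not_ge hji
      rw [List.orderedInsert, if_neg hji]
      have hs' : L'.Pairwise (· ≤ ·) := hs.of_cons
      have hf' : ContDiff ℝ (L'.length + 1 : ℕ) f :=
        hf.of_le (natCast_le_withTop (by simp))
      have hC2 : ContDiff ℝ 2 (mdL L' f) := by
        have h := contDiff_mdL (n := L'.length + 2) L' (by
          have : ((i :: L').length + 1 : ℕ) = L'.length + 2 := by simp
          rwa [this] at hf) (by omega)
        have : (L'.length + 2 - L'.length : ℕ) = 2 := by omega
        rw [this] at h
        exact_mod_cast h
      calc pd j (pd i (mdL L' f)) = pd i (pd j (mdL L' f)) := by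
            rw [pd_pd_comm hC2]
        _ = pd i (mdL (L'.orderedInsert (· ≤ ·) j) f) := by rw [ih hs' hf']
        _ = mdL (i :: L'.orderedInsert (· ≤ ·) j) f := rfl

lemma pd_md {n : ℕ} {f : (Fin d → ℝ) → E} (j : Fin d) (β : Fin d → ℕ)
    (hf : ContDiff ℝ (n : ℕ) f) (hβ : ∑ i, β i + 1 ≤ n) :
    pd j (md β f) = md (β + Pi.single j 1) f := by
  rw [md_eq_mdL]
  rw [pd_mdL_orderedInsert j (bigL β) (sorted_bigL β)
    (hf.of_le (natCast_le_withTop (by rw [length_bigL]; omega)))]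
  have hsort : ((bigL β).orderedInsert (· ≤ ·) j).Pairwise (· ≤ ·) :=
    List.Pairwise.orderedInsert j _ (sorted_bigL β)
  rw [mdL_sorted_eq_md hsort]
  have hcnt : (fun k => ((bigL β).orderedInsert (· ≤ ·) j).count k) = β + Pi.single j 1 := by
    funext k
    have hperm := List.perm_orderedInsert (· ≤ ·) j (bigL β)
    rw [hperm.count_eq, List.count_cons, count_bigL]
    simp only [Pi.add_apply, Pi.single_apply]
    by_cases hkj : k = j
    · subst hkj; simp
    · simp [hkj, Ne.symm hkj]
  rw [hcnt]

end Comm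

noncomputable section ConvSec
variable {d : ℕ}

lemma md_zero {E : Type*} [NormedAddCommGroup E] [NormedSpace ℝ E]
    (f : (Fin d → ℝ) → E) : md (fun _ => 0) f = f := by
  show (List.finRange d).foldr (fun i g => (pd i)^[(0:ℕ)] g) f = f
  induction (List.finRange d) with
  | nil => rfl
  | cons a l ih => simpa using ih

/-- convolution of a kernel with a weight -/
def conv (Φ w : (Fin d → ℝ) → ℝ) : (Fin d → ℝ) → ℝ := fun x => ∫ y, Φ (x - y) * w y

lemma integrable_conv_integrand {Φ w : (Fin d → ℝ) → ℝ} (hΦc : Continuous Φ) {c : ℝ}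
    (hΦb : ∀ z, |Φ z| ≤ c) (hw : Integrable w (volume : Measure (Fin d → ℝ)))
    (x : Fin d → ℝ) : Integrable (fun y => Φ (x - y) * w y) volume :=
  hw.bdd_mul ((hΦc.comp (continuous_const.sub continuous_id)).aestronglyMeasurable)
    (Filter.Eventually.of_forall fun y => by simpa [Real.norm_eq_abs] using hΦb (x - y))

lemma conv_bound {Φ w : (Fin d → ℝ) → ℝ} (hΦc : Continuous Φ) {c : ℝ}
    (hΦb : ∀ z, |Φ z| ≤ c) (hw : Integrable w (volume : Measure (Fin d → ℝ)))
    (x : Fin d → ℝ) : |conv Φ w x| ≤ c * ∫ y, |w y| := by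
  have h0 : (0:ℝ) ≤ c := le_trans (abs_nonneg _) (hΦb 0)
  calc |conv Φ w x| ≤ ∫ y, ‖Φ (x - y) * w y‖ :=
        norm_integral_le_integral_norm (fun y => Φ (x - y) * w y)
    _ ≤ ∫ y, c * |w y| := by
        apply integral_mono ((integrable_conv_integrand hΦc hΦb hw x).norm)
          (hw.abs.const_mul c)
        intro y
        dsimp only
        rw [Real.norm_eq_abs, abs_mul]
        exact mul_le_mul_of_nonneg_right (hΦb _) (abs_nonneg _)
    _ = c * ∫ y, |w y| := integral_const_mul c _

lemma conv_continuous {Φ w : (Fin d → ℝ) → ℝ} (hΦc : Continuous Φ) {c : ℝ}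
    (hΦb : ∀ z, |Φ z| ≤ c) (hw : Integrable w (volume : Measure (Fin d → ℝ))) :
    Continuous (conv Φ w) := by
  apply continuous_of_dominated (bound := fun y => c * |w y|)
  · intro x
    exact ((hΦc.comp (continuous_const.sub continuous_id)).aestronglyMeasurable).mul
      hw.aestronglyMeasurable
  · intro x
    filter_upwards with y
    rw [Real.norm_eq_abs, abs_mul]
    exact mul_le_mul_of_nonneg_right (hΦb _) (abs_nonneg _)
  · exact hw.abs.const_mul c
  · filter_upwards with y
    exact (hΦc.comp (continuous_id.sub continuous_const)).mul continuous_const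

lemma conv_hasFDerivAt {Φ w : (Fin d → ℝ) → ℝ} {K c : ℝ}
    (hΦd : Differentiable ℝ Φ) (hdc : Continuous (fderiv ℝ Φ))
    (hK : ∀ z, ‖fderiv ℝ Φ z‖ ≤ K) (hΦb : ∀ z, |Φ z| ≤ c)
    (hw : Integrable w (volume : Measure (Fin d → ℝ))) (x₀ : Fin d → ℝ) :
    HasFDerivAt (conv Φ w) (∫ y, w y • fderiv ℝ Φ (x₀ - y)) x₀ := by
  apply hasFDerivAt_integral_of_dominated_of_fderiv_le
    (F' := fun x y => w y • fderiv ℝ Φ (x - y)) (bound := fun y => K * |w y|)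
    (s := Set.univ) Filter.univ_mem
  · filter_upwards with x
    exact ((hΦd.continuous.comp (continuous_const.sub continuous_id)).aestronglyMeasurable).mul
      hw.aestronglyMeasurable
  · exact integrable_conv_integrand hΦd.continuous hΦb hw x₀
  · exact hw.aestronglyMeasurable.smul
      ((hdc.comp (continuous_const.sub continuous_id)).aestronglyMeasurable)
  · filter_upwards with y
    intro x _
    rw [norm_smul (w y) (fderiv ℝ Φ (x - y)), Real.norm_eq_abs, mul_comm]
    exact mul_le_mul_of_nonneg_right (hK _) (abs_nonneg _)
  · exact hw.abs.const_mul K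
  · filter_upwards with y
    intro x _
    have h1 : HasFDerivAt (fun z : Fin d → ℝ => z - y)
        (ContinuousLinearMap.id ℝ (Fin d → ℝ)) x := (hasFDerivAt_id x).sub_const y
    have h2 : HasFDerivAt (fun z : Fin d → ℝ => Φ (z - y)) (fderiv ℝ Φ (x - y)) x := by
      have := ((hΦd (x - y)).hasFDerivAt).comp x h1
      exact this
    simpa using h2.mul_const (w y)

lemma integrable_deriv_integrand {Φ w : (Fin d → ℝ) → ℝ} {K : ℝ}
    (hdc : Continuous (fderiv ℝ Φ)) (hK : ∀ z, ‖fderiv ℝ Φ z‖ ≤ K)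
    (hw : Integrable w (volume : Measure (Fin d → ℝ))) (x : Fin d → ℝ) :
    Integrable (fun y => w y • fderiv ℝ Φ (x - y)) volume := by
  apply Integrable.mono' (hw.abs.const_mul K)
  · exact hw.aestronglyMeasurable.smul
      ((hdc.comp (continuous_const.sub continuous_id)).aestronglyMeasurable)
  · filter_upwards with y
    rw [norm_smul (w y) (fderiv ℝ Φ (x - y)), Real.norm_eq_abs, mul_comm]
    exact mul_le_mul_of_nonneg_right (hK _) (abs_nonneg _)

lemma pd_conv {Φ w : (Fin d → ℝ) → ℝ} {K c : ℝ}
    (hΦd : Differentiable ℝ Φ) (hdc : Continuous (fderiv ℝ Φ))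
    (hK : ∀ z, ‖fderiv ℝ Φ z‖ ≤ K) (hΦb : ∀ z, |Φ z| ≤ c)
    (hw : Integrable w (volume : Measure (Fin d → ℝ))) (i : Fin d) :
    pd i (conv Φ w) = conv (pd i Φ) w := by
  funext x
  have hF := conv_hasFDerivAt hΦd hdc hK hΦb hw x
  show fderiv ℝ (conv Φ w) x (Pi.single i 1) = _
  rw [hF.fderiv]
  rw [ContinuousLinearMap.integral_apply (integrable_deriv_integrand hdc hK hw x)]
  show ∫ y, w y • (fderiv ℝ Φ (x - y)) (Pi.single i 1) = ∫ y, pd i Φ (x - y) * w y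
  apply integral_congr_ae
  filter_upwards with y
  show w y • pd i Φ (x - y) = pd i Φ (x - y) * w y
  rw [smul_eq_mul, mul_comm]

end ConvSec

noncomputable section VSec
variable {d m : ℕ} {V : (Fin d → ℝ) → ℝ}

lemma clm_norm_le_sum (L : (Fin d → ℝ) →L[ℝ] ℝ) :
    ‖L‖ ≤ ∑ j, ‖L (Pi.single j 1)‖ := by
  apply ContinuousLinearMap.opNorm_le_bound _
    (Finset.sum_nonneg fun j _ => norm_nonneg _)
  intro v
  have hv : v = ∑ j, v j • (Pi.single j 1 : Fin d → ℝ) := by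
    funext k
    rw [Finset.sum_apply]
    rw [Finset.sum_eq_single k]
    · simp
    · intro b _ hb; simp [Pi.single_apply, Ne.symm hb]
    · intro h; exact absurd (Finset.mem_univ k) h
  calc ‖L v‖ = ‖∑ j, v j • L (Pi.single j 1)‖ := by
        conv_lhs => rw [hv]
        rw [map_sum]
        simp_rw [ContinuousLinearMap.map_smul]
    _ ≤ ∑ j, ‖v j • L (Pi.single j 1)‖ := norm_sum_le _ _
    _ ≤ ∑ j, ‖L (Pi.single j 1)‖ * ‖v‖ := by
        apply Finset.sum_le_sum
        intro j _
        rw [norm_smul, mul_comm]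
        exact mul_le_mul_of_nonneg_left (norm_le_pi_norm v j) (norm_nonneg _)
    _ = (∑ j, ‖L (Pi.single j 1)‖) * ‖v‖ := by rw [Finset.sum_mul]

/-- a uniform bound for all the derivatives of `V` of order at most `m`. -/
def Mbd (hV : ContDiffBdd d m V) : ℝ :=
  1 + ∑ γ ∈ Finset.Iic (fun _ : Fin d => m),
    max (if h : (∑ i, γ i) ≤ m then Classical.choose (hV.2 γ h) else 0) 0

lemma Mbd_pos (hV : ContDiffBdd d m V) : 0 < Mbd hV := by
  have : (0:ℝ) ≤ ∑ γ ∈ Finset.Iic (fun _ : Fin d => m),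
      max (if h : (∑ i, γ i) ≤ m then Classical.choose (hV.2 γ h) else 0) 0 :=
    Finset.sum_nonneg fun γ _ => le_max_right _ _
  unfold Mbd; linarith

lemma Mbd_ge_one (hV : ContDiffBdd d m V) : 1 ≤ Mbd hV := by
  have : (0:ℝ) ≤ ∑ γ ∈ Finset.Iic (fun _ : Fin d => m),
      max (if h : (∑ i, γ i) ≤ m then Classical.choose (hV.2 γ h) else 0) 0 :=
    Finset.sum_nonneg fun γ _ => le_max_right _ _
  unfold Mbd; linarith

lemma md_V_le_Mbd (hV : ContDiffBdd d m V) {γ : Fin d → ℕ} (hγ : ∑ i, γ i ≤ m)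
    (x : Fin d → ℝ) : |md γ V x| ≤ Mbd hV := by
  have hmem : γ ∈ Finset.Iic (fun _ : Fin d => m) := by
    rw [Finset.mem_Iic]
    intro i
    calc γ i ≤ ∑ j, γ j := Finset.single_le_sum (fun j _ => Nat.zero_le _) (Finset.mem_univ i)
      _ ≤ m := hγ
  have hB : |md γ V x| ≤ (if h : (∑ i, γ i) ≤ m then Classical.choose (hV.2 γ h) else 0) := by
    rw [dif_pos hγ]
    simpa [Real.norm_eq_abs] using Classical.choose_spec (hV.2 γ hγ) x
  have hle : (if h : (∑ i, γ i) ≤ m then Classical.choose (hV.2 γ h) else 0) ≤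
      ∑ γ' ∈ Finset.Iic (fun _ : Fin d => m),
        max (if h : (∑ i, γ' i) ≤ m then Classical.choose (hV.2 γ' h) else 0) 0 := by
    calc _ ≤ max (if h : (∑ i, γ i) ≤ m then Classical.choose (hV.2 γ h) else 0) 0 :=
          le_max_left _ _
      _ ≤ _ := Finset.single_le_sum (f := fun γ' =>
            max (if h : (∑ i, γ' i) ≤ m then Classical.choose (hV.2 γ' h) else 0) 0)
            (fun γ' _ => le_max_right _ _) hmem
  unfold Mbd; linarith

lemma fderiv_md_V_le (hV : ContDiffBdd d m V) {β : Fin d → ℕ} (hβ : ∑ i, β i + 1 ≤ m)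
    (z : Fin d → ℝ) : ‖fderiv ℝ (md β V) z‖ ≤ d * Mbd hV := by
  calc ‖fderiv ℝ (md β V) z‖ ≤ ∑ j, ‖fderiv ℝ (md β V) z (Pi.single j 1)‖ :=
        clm_norm_le_sum _
    _ ≤ ∑ _j : Fin d, Mbd hV := by
        apply Finset.sum_le_sum
        intro j _
        show ‖pd j (md β V) z‖ ≤ Mbd hV
        rw [pd_md j β hV.1 hβ]
        have hsum : ∑ i, (β + Pi.single j 1 : Fin d → ℕ) i ≤ m := by
          have : ∑ i, (β + Pi.single j 1 : Fin d → ℕ) i = (∑ i, β i) + 1 := by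
            simp only [Pi.add_apply]
            rw [Finset.sum_add_distrib]
            simp [Pi.single_apply]
          omega
        simpa [Real.norm_eq_abs] using md_V_le_Mbd hV hsum z
    _ = d * Mbd hV := by simp [mul_comm]

end VSec

noncomputable section MdConv
variable {d m : ℕ} {V : (Fin d → ℝ) → ℝ} {w : (Fin d → ℝ) → ℝ}

lemma mdL_conv_sorted (hV : ContDiffBdd d m V)
    (hw : Integrable w (volume : Measure (Fin d → ℝ))) :
    ∀ L : List (Fin d), L.Pairwise (· ≤ ·) → L.length ≤ m →
      mdL L (conv V w) = conv (md (fun j => L.count j) V) w := by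
  intro L
  induction L with
  | nil =>
    intro _ _
    rw [mdL_nil]
    have : (fun j : Fin d => List.count j ([] : List (Fin d))) = (fun _ => 0) := by
      funext j; simp
    rw [this, md_zero]
  | cons i L' ih =>
    intro hs hlen
    have hlen' : L'.length ≤ m := by simp at hlen; omega
    rw [mdL_cons, ih hs.of_cons hlen']
    set β := fun j : Fin d => L'.count j with hβdef
    have hβ : ∑ j, β j = L'.length := sum_count_eq_length L'
    have hβm : ∑ j, β j + 1 ≤ m := by simp at hlen; omega
    have hΦd : Differentiable ℝ (md β V) := differentiable_md β hV.1 (by omega)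
    have hΦC1 : ContDiff ℝ ((m - ∑ j, β j : ℕ)) (md β V) := contDiff_md β hV.1 (by omega)
    have hdc : Continuous (fderiv ℝ (md β V)) := by
      apply hΦC1.continuous_fderiv
      have : (1:ℕ) ≤ m - ∑ j, β j := by omega
      exact_mod_cast (show m - ∑ j, β j ≠ 0 by omega)
    have hK := fderiv_md_V_le hV hβm
    have hΦb := md_V_le_Mbd hV (show ∑ j, β j ≤ m by omega)
    rw [pd_conv hΦd hdc hK hΦb hw i]
    rw [pd_md i β hV.1 hβm]
    have hcnt : (fun j : Fin d => (i :: L').count j) = β + Pi.single i 1 := by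
      funext j
      simp only [List.count_cons, Pi.add_apply, Pi.single_apply, hβdef]
      by_cases hij : i = j
      · subst hij; simp
      · simp [hij, Ne.symm hij]
    rw [hcnt]

lemma md_conv (hV : ContDiffBdd d m V)
    (hw : Integrable w (volume : Measure (Fin d → ℝ)))
    {γ : Fin d → ℕ} (hγ : ∑ i, γ i ≤ m) :
    md γ (conv V w) = conv (md γ V) w := by
  rw [md_eq_mdL γ, mdL_conv_sorted hV hw (bigL γ) (sorted_bigL γ)
    (by rw [length_bigL]; exact hγ)]
  have : (fun j : Fin d => (bigL γ).count j) = γ := by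
    funext j; exact count_bigL γ j
  rw [this]

lemma continuous_md_V (hV : ContDiffBdd d m V) {γ : Fin d → ℕ} (hγ : ∑ i, γ i ≤ m) :
    Continuous (md γ V) :=
  (contDiff_md γ hV.1 hγ).continuous

lemma md_conv_bound (hV : ContDiffBdd d m V)
    (hw : Integrable w (volume : Measure (Fin d → ℝ)))
    {γ : Fin d → ℕ} (hγ : ∑ i, γ i ≤ m) (x : Fin d → ℝ) :
    |md γ (conv V w) x| ≤ Mbd hV * ∫ y, |w y| := by
  rw [md_conv hV hw hγ]
  exact conv_bound (continuous_md_V hV hγ) (fun z => md_V_le_Mbd hV hγ z) hw x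

lemma continuous_md_conv (hV : ContDiffBdd d m V)
    (hw : Integrable w (volume : Measure (Fin d → ℝ)))
    {γ : Fin d → ℕ} (hγ : ∑ i, γ i ≤ m) :
    Continuous (md γ (conv V w)) := by
  rw [md_conv hV hw hγ]
  exact conv_continuous (continuous_md_V hV hγ) (fun z => md_V_le_Mbd hV hγ z) hw

lemma differentiable_md_conv (hV : ContDiffBdd d m V)
    (hw : Integrable w (volume : Measure (Fin d → ℝ)))
    {γ : Fin d → ℕ} (hγ : ∑ i, γ i < m) :
    Differentiable ℝ (md γ (conv V w)) := by
  rw [md_conv hV hw (le_of_lt hγ)]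
  intro x
  have hγ1 : ∑ i, γ i + 1 ≤ m := hγ
  have hΦd : Differentiable ℝ (md γ V) := differentiable_md γ hV.1 hγ
  have hΦC1 : ContDiff ℝ ((m - ∑ j, γ j : ℕ)) (md γ V) := contDiff_md γ hV.1 (le_of_lt hγ)
  have hdc : Continuous (fderiv ℝ (md γ V)) := by
    apply hΦC1.continuous_fderiv
    have : (1:ℕ) ≤ m - ∑ j, γ j := by omega
    exact_mod_cast (show m - ∑ j, γ j ≠ 0 by omega)
  exact (conv_hasFDerivAt hΦd hdc (fderiv_md_V_le hV hγ1)
    (fun z => md_V_le_Mbd hV (le_of_lt hγ) z) hw x).differentiableAt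

end MdConv

noncomputable section Leibniz
variable {d : ℕ}

lemma count_cons_fun (i : Fin d) (L : List (Fin d)) :
    (fun j : Fin d => (i :: L).count j) = (fun j : Fin d => L.count j) + Pi.single i 1 := by
  funext j
  simp only [List.count_cons, Pi.add_apply, Pi.single_apply]
  by_cases hij : i = j
  · subst hij; simp
  · simp [hij, Ne.symm hij]

lemma pd_md_support {E : Type*} [NormedAddCommGroup E] [NormedSpace ℝ E]
    {f : (Fin d → ℝ) → E} {β : Fin d → ℕ} {i : Fin d} (hβ : ∀ j, β j ≠ 0 → i ≤ j) :
    pd i (md β f) = md (β + Pi.single i 1) f := by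
  rw [md_eq_mdL β]
  have hsort : (i :: bigL β).Pairwise (· ≤ ·) := by
    rw [List.pairwise_cons]
    exact ⟨fun b hb => hβ b (mem_bigL hb).ne', sorted_bigL β⟩
  have h1 : pd i (mdL (bigL β) f) = mdL (i :: bigL β) f := rfl
  rw [h1, mdL_sorted_eq_md hsort, count_cons_fun]
  have : (fun j : Fin d => (bigL β).count j) = β := by funext j; exact count_bigL β j
  rw [this]

lemma differentiableAt_list_sum {ι : Type*} {T : List ι} {F : ι → (Fin d → ℝ) → ℂ}
    {x : Fin d → ℝ} (h : ∀ p ∈ T, DifferentiableAt ℝ (F p) x) :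
    DifferentiableAt ℝ (fun y => (T.map (fun p => F p y)).sum) x := by
  induction T with
  | nil => simpa using differentiableAt_const (0:ℂ)
  | cons a T' ih =>
    simp only [List.map_cons, List.sum_cons]
    exact (h a (List.mem_cons_self)).add
      (ih fun p hp => h p (List.mem_cons_of_mem a hp))

lemma pd_list_sum {ι : Type*} (i : Fin d) {T : List ι} {F : ι → (Fin d → ℝ) → ℂ}
    (h : ∀ p ∈ T, Differentiable ℝ (F p)) (x : Fin d → ℝ) :
    pd i (fun y => (T.map (fun p => F p y)).sum) x = (T.map (fun p => pd i (F p) x)).sum := by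
  induction T with
  | nil =>
    simp only [List.map_nil, List.sum_nil]
    show fderiv ℝ (fun _ => (0:ℂ)) x (Pi.single i 1) = 0
    simp
  | cons a T' ih =>
    simp only [List.map_cons, List.sum_cons]
    have hA : DifferentiableAt ℝ (F a) x := (h a (List.mem_cons_self)) x
    have hS : DifferentiableAt ℝ (fun y => (T'.map (fun p => F p y)).sum) x :=
      differentiableAt_list_sum fun p hp => (h p (List.mem_cons_of_mem a hp)) x
    show fderiv ℝ (fun y => F a y + (T'.map (fun p => F p y)).sum) x (Pi.single i 1) = _
    rw [fderiv_fun_add hA hS]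
    rw [ContinuousLinearMap.add_apply]
    congr 1
    exact ih fun p hp => h p (List.mem_cons_of_mem a hp)

lemma pd_ofReal_mul {g : (Fin d → ℝ) → ℝ} {v : (Fin d → ℝ) → ℂ} {x : Fin d → ℝ}
    (hg : DifferentiableAt ℝ g x) (hv : DifferentiableAt ℝ v x) (i : Fin d) :
    pd i (fun y => (g y : ℂ) * v y) x = ((pd i g x : ℝ) : ℂ) * v x + (g x : ℂ) * pd i v x := by
  have hG : DifferentiableAt ℝ (fun y => (g y : ℂ)) x :=
    Complex.ofRealCLM.differentiableAt.comp x hg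
  show fderiv ℝ (fun y => (g y : ℂ) * v y) x (Pi.single i 1) = _
  rw [fderiv_fun_mul hG hv]
  rw [ContinuousLinearMap.add_apply]
  have h1 : fderiv ℝ (fun y => (g y : ℂ)) x =
      Complex.ofRealCLM.comp (fderiv ℝ g x) := by
    have := fderiv_comp x (Complex.ofRealCLM.differentiableAt (x := g x)) hg
    rw [ContinuousLinearMap.fderiv] at this; exact this
  rw [ContinuousLinearMap.smul_apply, ContinuousLinearMap.smul_apply, h1]
  show (g x : ℂ) • (fderiv ℝ v x) (Pi.single i 1) +
      v x • Complex.ofRealCLM ((fderiv ℝ g x) (Pi.single i 1)) = _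
  show (g x : ℂ) • pd i v x + v x • Complex.ofRealCLM (pd i g x) = _
  rw [smul_eq_mul, smul_eq_mul, Complex.ofRealCLM_apply]
  ring

/-- the list of pairs of multi-indices in the Leibniz expansion -/
def termList : List (Fin d) → List ((Fin d → ℕ) × (Fin d → ℕ))
  | [] => [(0, 0)]
  | i :: L => (termList L).flatMap fun p => [(p.1 + Pi.single i 1, p.2), (p.1, p.2 + Pi.single i 1)]

lemma length_flatMap_pair {α β : Type*} (T : List α) (A B : α → β) :
    (T.flatMap fun p => [A p, B p]).length = 2 * T.length := by
  induction T with
  | nil => simp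
  | cons a T' ih => simp [List.flatMap_cons, ih]; omega

lemma length_termList (L : List (Fin d)) : (termList L).length = 2 ^ L.length := by
  induction L with
  | nil => rfl
  | cons i L' ih =>
    show ((termList L').flatMap _).length = _
    rw [length_flatMap_pair, ih]
    simp [pow_succ]; omega

lemma sum_termList {L : List (Fin d)} {p : (Fin d → ℕ) × (Fin d → ℕ)}
    (hp : p ∈ termList L) : p.1 + p.2 = (fun j => L.count j) := by
  induction L generalizing p with
  | nil =>
    simp only [termList, List.mem_singleton] at hp
    subst hp
    funext j; simp
  | cons i L' ih =>
    simp only [termList, List.mem_flatMap] at hp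
    rcases hp with ⟨q, hq, hpq⟩
    rw [count_cons_fun, ← ih hq]
    simp only [List.mem_cons, List.mem_singleton] at hpq
    rcases hpq with rfl | hpq
    · show q.1 + Pi.single i 1 + q.2 = q.1 + q.2 + Pi.single i 1
      abel
    · rcases hpq with rfl | hpq
      · show q.1 + (q.2 + Pi.single i 1) = q.1 + q.2 + Pi.single i 1
        abel
      · exact absurd hpq (List.not_mem_nil)

lemma sum_map_flatMap_pair {α β : Type*} (T : List α) (A B : α → β) (h : β → ℂ) :
    ((T.flatMap fun p => [A p, B p]).map h).sum = (T.map fun p => h (A p) + h (B p)).sum := by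
  induction T with
  | nil => simp
  | cons a T' ih => simp [List.flatMap_cons, ih]; ring

end Leibniz

noncomputable section LeibnizMain
variable {d : ℕ}

lemma md_zero' {E : Type*} [NormedAddCommGroup E] [NormedSpace ℝ E]
    (f : (Fin d → ℝ) → E) : md (0 : Fin d → ℕ) f = f := md_zero f

lemma mdL_mul_expansion {g : (Fin d → ℝ) → ℝ} {u : (Fin d → ℝ) → ℂ} :
    ∀ L : List (Fin d), L.Pairwise (· ≤ ·) →
      (∀ β : Fin d → ℕ, (∀ j, β j ≤ L.count j) → (∑ j, β j) + 1 ≤ L.length →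
        Differentiable ℝ (md β g)) →
      (∀ γ : Fin d → ℕ, (∀ j, γ j ≤ L.count j) → (∑ j, γ j) + 1 ≤ L.length →
        Differentiable ℝ (md γ u)) →
      mdL L (fun y => (g y : ℂ) * u y)
        = fun x => ((termList L).map
            (fun p => ((md p.1 g x : ℝ) : ℂ) * md p.2 u x)).sum := by
  intro L
  induction L with
  | nil =>
    intro _ _ _
    funext x
    show (g x : ℂ) * u x = _
    rw [show termList ([] : List (Fin d)) = [(0,0)] from rfl]
    simp [md_zero']
  | cons i L' ih =>
    intro hs hgd hud
    have hs' : L'.Pairwise (· ≤ ·) := hs.of_cons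
    have hmem_ge : ∀ j ∈ L', i ≤ j := fun j hj => (List.pairwise_cons.1 hs).1 j hj
    have hcount_le : ∀ j, L'.count j ≤ (i :: L').count j := by
      intro j
      have h := congrFun (count_cons_fun i L') j
      simp only [Pi.add_apply] at h
      omega
    have hlen : (i :: L').length = L'.length + 1 := rfl
    have hgd' : ∀ β : Fin d → ℕ, (∀ j, β j ≤ L'.count j) → (∑ j, β j) + 1 ≤ L'.length →
        Differentiable ℝ (md β g) := fun β h1 h2 =>
      hgd β (fun j => le_trans (h1 j) (hcount_le j)) (by rw [hlen]; omega)
    have hud' : ∀ γ : Fin d → ℕ, (∀ j, γ j ≤ L'.count j) → (∑ j, γ j) + 1 ≤ L'.length →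
        Differentiable ℝ (md γ u) := fun γ h1 h2 =>
      hud γ (fun j => le_trans (h1 j) (hcount_le j)) (by rw [hlen]; omega)
    have hexp := ih hs' hgd' hud'
    rw [mdL_cons, hexp]
    funext x
    -- facts about members of termList L'
    have hco : ∀ p : (Fin d → ℕ) × (Fin d → ℕ), p ∈ termList L' →
        (∀ j, p.1 j ≤ L'.count j ∧ p.2 j ≤ L'.count j) ∧
          (∑ j, p.1 j) + (∑ j, p.2 j) = L'.length := by
      intro p hp
      have hP := sum_termList hp
      constructor
      · intro j
        have := congrFun hP j
        simp only [Pi.add_apply] at this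
        omega
      · have : ∑ j, (p.1 + p.2) j = ∑ j, (fun j => L'.count j) j := by rw [hP]
        simp only [Pi.add_apply] at this
        rw [Finset.sum_add_distrib] at this
        rw [this]
        exact sum_count_eq_length L'
    have hg1 : ∀ p : (Fin d → ℕ) × (Fin d → ℕ), p ∈ termList L' →
        Differentiable ℝ (md p.1 g) := by
      intro p hp
      rcases hco p hp with ⟨h1, h2⟩
      have hsle : ∑ j, p.1 j ≤ L'.length := by omega
      exact hgd p.1 (fun j => le_trans (h1 j).1 (hcount_le j)) (by rw [hlen]; omega)
    have hu1 : ∀ p : (Fin d → ℕ) × (Fin d → ℕ), p ∈ termList L' →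
        Differentiable ℝ (md p.2 u) := by
      intro p hp
      rcases hco p hp with ⟨h1, h2⟩
      exact hud p.2 (fun j => le_trans (h1 j).2 (hcount_le j)) (by rw [hlen]; omega)
    have hdiff : ∀ p ∈ termList L',
        Differentiable ℝ (fun y => ((md p.1 g y : ℝ) : ℂ) * md p.2 u y) := by
      intro p hp
      exact (Complex.ofRealCLM.differentiable.comp (hg1 p hp)).mul (hu1 p hp)
    rw [pd_list_sum i hdiff x]
    have hterm : ∀ p ∈ termList L',
        pd i (fun y => ((md p.1 g y : ℝ) : ℂ) * md p.2 u y) x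
          = ((md (p.1 + Pi.single i 1) g x : ℝ) : ℂ) * md p.2 u x
            + ((md p.1 g x : ℝ) : ℂ) * md (p.2 + Pi.single i 1) u x := by
      intro p hp
      rw [pd_ofReal_mul ((hg1 p hp) x) ((hu1 p hp) x) i]
      have hsupp1 : ∀ j, p.1 j ≠ 0 → i ≤ j := by
        intro j hj
        have := ((hco p hp).1 j).1
        have hjL : j ∈ L' := by
          rw [← List.count_pos_iff]
          omega
        exact hmem_ge j hjL
      have hsupp2 : ∀ j, p.2 j ≠ 0 → i ≤ j := by
        intro j hj
        have := ((hco p hp).1 j).2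
        have hjL : j ∈ L' := by
          rw [← List.count_pos_iff]
          omega
        exact hmem_ge j hjL
      rw [pd_md_support hsupp1, pd_md_support hsupp2]
    rw [List.map_congr_left hterm]
    show _ = ((termList (i :: L')).map
      (fun p => ((md p.1 g x : ℝ) : ℂ) * md p.2 u x)).sum
    rw [show termList (i :: L') = (termList L').flatMap
      (fun p => [(p.1 + Pi.single i 1, p.2), (p.1, p.2 + Pi.single i 1)]) from rfl]
    rw [sum_map_flatMap_pair]

lemma pd_sub_apply {f g : (Fin d → ℝ) → ℂ} {x : Fin d → ℝ} (i : Fin d)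
    (hf : DifferentiableAt ℝ f x) (hg : DifferentiableAt ℝ g x) :
    pd i (fun y => f y - g y) x = pd i f x - pd i g x := by
  show fderiv ℝ (fun y => f y - g y) x (Pi.single i 1) = _
  rw [fderiv_fun_sub hf hg]
  rfl

lemma mdL_sub {f g : (Fin d → ℝ) → ℂ} :
    ∀ L : List (Fin d),
      (∀ L'' : List (Fin d), L'' <:+ L → L''.length < L.length → Differentiable ℝ (mdL L'' f)) →
      (∀ L'' : List (Fin d), L'' <:+ L → L''.length < L.length → Differentiable ℝ (mdL L'' g)) →
      mdL L (fun y => f y - g y) = fun x => mdL L f x - mdL L g x := by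
  intro L
  induction L with
  | nil => intro _ _; rfl
  | cons i L' ih =>
    intro hf hg
    have hsf : ∀ L'' : List (Fin d), L'' <:+ L' → L''.length < L'.length →
        Differentiable ℝ (mdL L'' f) := fun L'' h1 h2 =>
      hf L'' (h1.trans (List.suffix_cons i L')) (by simp; omega)
    have hsg : ∀ L'' : List (Fin d), L'' <:+ L' → L''.length < L'.length →
        Differentiable ℝ (mdL L'' g) := fun L'' h1 h2 =>
      hg L'' (h1.trans (List.suffix_cons i L')) (by simp; omega)
    rw [mdL_cons, ih hsf hsg]
    funext x
    exact pd_sub_apply i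
      ((hf L' (List.suffix_cons i L') (by simp)) x)
      ((hg L' (List.suffix_cons i L') (by simp)) x)

end LeibnizMain

noncomputable section L2Tools
variable {d : ℕ}

lemma inner_eq_mul (a b : ℝ) : (inner ℝ a b : ℝ) = a * b := by
  simp [RCLike.inner_apply, mul_comm]

lemma cauchy_schwarz_int {f g : (Fin d → ℝ) → ℝ}
    (hf : MemLp f 2 (volume : Measure (Fin d → ℝ)))
    (hg : MemLp g 2 (volume : Measure (Fin d → ℝ))) :
    ∫ x, f x * g x ≤ l2norm f * l2norm g := by
  set F := hf.toLp f with hF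
  set G := hg.toLp g with hG
  have h1 : ∫ x, f x * g x = ∫ x, F x * G x := by
    apply integral_congr_ae
    filter_upwards [hf.coeFn_toLp, hg.coeFn_toLp] with x h1 h2
    rw [h1, h2]
  have h2 : ∫ x, F x * G x = (inner ℝ F G : ℝ) := by
    rw [L2.inner_def]
    apply integral_congr_ae
    filter_upwards with x
    rw [inner_eq_mul]
  have h3 : (inner ℝ F G : ℝ) ≤ ‖F‖ * ‖G‖ := real_inner_le_norm F G
  rw [h1, h2]
  calc (inner ℝ F G : ℝ) ≤ ‖F‖ * ‖G‖ := h3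
    _ = l2norm f * l2norm g := by
      rw [Lp.norm_toLp, Lp.norm_toLp]; rfl

lemma integrable_mul_L2 {f g : (Fin d → ℝ) → ℝ}
    (hf : MemLp f 2 (volume : Measure (Fin d → ℝ)))
    (hg : MemLp g 2 (volume : Measure (Fin d → ℝ))) :
    Integrable (fun x => f x * g x) (volume : Measure (Fin d → ℝ)) := by
  have h := L2.integrable_inner (𝕜 := ℝ) (hf.toLp f) (hg.toLp g)
  apply h.congr
  filter_upwards [hf.coeFn_toLp, hg.coeFn_toLp] with x h1 h2
  rw [inner_eq_mul, h1, h2]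

lemma integrable_sq_norm {u : (Fin d → ℝ) → ℂ}
    (hu : MemLp u 2 (volume : Measure (Fin d → ℝ))) :
    Integrable (fun y => ‖u y‖ ^ 2) (volume : Measure (Fin d → ℝ)) := by
  have := integrable_mul_L2 hu.norm hu.norm
  apply this.congr
  filter_upwards with x
  rw [pow_two]

lemma l2norm_norm {u : (Fin d → ℝ) → ℂ} : l2norm (fun y => ‖u y‖) = l2norm u := by
  unfold l2norm
  rw [eLpNorm_norm]

lemma int_sq_le {u : (Fin d → ℝ) → ℂ}
    (hu : MemLp u 2 (volume : Measure (Fin d → ℝ))) :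
    ∫ y, ‖u y‖ ^ 2 ≤ (l2norm u) ^ 2 := by
  have h := cauchy_schwarz_int hu.norm hu.norm
  rw [l2norm_norm] at h
  calc ∫ y, ‖u y‖ ^ 2 = ∫ y, ‖u y‖ * ‖u y‖ := by
        apply integral_congr_ae; filter_upwards with y; rw [pow_two]
    _ ≤ l2norm u * l2norm u := h
    _ = (l2norm u) ^ 2 := (pow_two _).symm

lemma l2norm_nonneg {E : Type*} [NormedAddCommGroup E] (f : (Fin d → ℝ) → E) :
    0 ≤ l2norm f := ENNReal.toReal_nonneg

lemma l2norm_add_le {f g : (Fin d → ℝ) → ℂ}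
    (hf : MemLp f 2 (volume : Measure (Fin d → ℝ)))
    (hg : MemLp g 2 (volume : Measure (Fin d → ℝ))) :
    l2norm (fun x => f x + g x) ≤ l2norm f + l2norm g := by
  have h := eLpNorm_add_le hf.aestronglyMeasurable hg.aestronglyMeasurable
    (by norm_num : (1:ℝ≥0∞) ≤ 2)
  unfold l2norm
  calc (eLpNorm (fun x => f x + g x) 2 volume).toReal
      ≤ (eLpNorm f 2 volume + eLpNorm g 2 volume).toReal := by
        apply ENNReal.toReal_mono (ENNReal.add_ne_top.2 ⟨hf.2.ne, hg.2.ne⟩)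
        exact h
    _ = _ := ENNReal.toReal_add hf.2.ne hg.2.ne

lemma l2norm_real_add_le {f g : (Fin d → ℝ) → ℝ}
    (hf : MemLp f 2 (volume : Measure (Fin d → ℝ)))
    (hg : MemLp g 2 (volume : Measure (Fin d → ℝ))) :
    l2norm (fun x => f x + g x) ≤ l2norm f + l2norm g := by
  have h := eLpNorm_add_le hf.aestronglyMeasurable hg.aestronglyMeasurable
    (by norm_num : (1:ℝ≥0∞) ≤ 2)
  unfold l2norm
  calc (eLpNorm (fun x => f x + g x) 2 volume).toReal
      ≤ (eLpNorm f 2 volume + eLpNorm g 2 volume).toReal := by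
        apply ENNReal.toReal_mono (ENNReal.add_ne_top.2 ⟨hf.2.ne, hg.2.ne⟩)
        exact h
    _ = _ := ENNReal.toReal_add hf.2.ne hg.2.ne

lemma w_diff_int_le {u₁ u₂ : (Fin d → ℝ) → ℂ}
    (hu₁ : MemLp u₁ 2 (volume : Measure (Fin d → ℝ)))
    (hu₂ : MemLp u₂ 2 (volume : Measure (Fin d → ℝ))) :
    ∫ y, |‖u₂ y‖ ^ 2 - ‖u₁ y‖ ^ 2|
      ≤ (l2norm u₂ + l2norm u₁) * l2norm (fun y => u₂ y - u₁ y) := by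
  have hdiff : MemLp (fun y => u₂ y - u₁ y) 2 (volume : Measure (Fin d → ℝ)) := hu₂.sub hu₁
  have hS : MemLp (fun y => ‖u₂ y‖ + ‖u₁ y‖) 2 (volume : Measure (Fin d → ℝ)) :=
    hu₂.norm.add hu₁.norm
  have hD : MemLp (fun y => ‖u₂ y - u₁ y‖) 2 (volume : Measure (Fin d → ℝ)) := hdiff.norm
  have hpt : ∀ y, |‖u₂ y‖ ^ 2 - ‖u₁ y‖ ^ 2| ≤ (‖u₂ y‖ + ‖u₁ y‖) * ‖u₂ y - u₁ y‖ := by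
    intro y
    have h1 : ‖u₂ y‖ ^ 2 - ‖u₁ y‖ ^ 2 = (‖u₂ y‖ - ‖u₁ y‖) * (‖u₂ y‖ + ‖u₁ y‖) := by ring
    rw [h1, abs_mul, abs_of_nonneg (by positivity : (0:ℝ) ≤ ‖u₂ y‖ + ‖u₁ y‖)]
    rw [mul_comm]
    apply mul_le_mul_of_nonneg_left _ (by positivity)
    exact abs_norm_sub_norm_le _ _
  calc ∫ y, |‖u₂ y‖ ^ 2 - ‖u₁ y‖ ^ 2|
      ≤ ∫ y, (‖u₂ y‖ + ‖u₁ y‖) * ‖u₂ y - u₁ y‖ := by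
        apply integral_mono _ (integrable_mul_L2 hS hD) hpt
        exact ((integrable_sq_norm hu₂).sub (integrable_sq_norm hu₁)).abs
    _ ≤ l2norm (fun y => ‖u₂ y‖ + ‖u₁ y‖) * l2norm (fun y => ‖u₂ y - u₁ y‖) :=
        cauchy_schwarz_int hS hD
    _ ≤ (l2norm u₂ + l2norm u₁) * l2norm (fun y => u₂ y - u₁ y) := by
        have h1 : l2norm (fun y => ‖u₂ y‖ + ‖u₁ y‖) ≤ l2norm u₂ + l2norm u₁ := by
          have := l2norm_real_add_le (f := fun y => ‖u₂ y‖) (g := fun y => ‖u₁ y‖)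
            hu₂.norm hu₁.norm
          rwa [l2norm_norm, l2norm_norm] at this
        have h2 : l2norm (fun y => ‖u₂ y - u₁ y‖) = l2norm (fun y => u₂ y - u₁ y) :=
          l2norm_norm
        rw [h2]
        exact mul_le_mul_of_nonneg_right h1 (l2norm_nonneg _) |>.trans
          (le_of_eq rfl)

lemma l2norm_ofReal_mul_le {g : (Fin d → ℝ) → ℝ} {v : (Fin d → ℝ) → ℂ} {c : ℝ}
    (hv : MemLp v 2 (volume : Measure (Fin d → ℝ))) (hb : ∀ x, |g x| ≤ c) :
    l2norm (fun x => (g x : ℂ) * v x) ≤ c * l2norm v := by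
  have hc : 0 ≤ c := le_trans (abs_nonneg _) (hb 0)
  have hpt : ∀ᵐ x ∂(volume : Measure (Fin d → ℝ)),
      ‖(g x : ℂ) * v x‖ ≤ (c.toNNReal : ℝ) * ‖v x‖ := by
    filter_upwards with x
    rw [norm_mul, Complex.norm_real, Real.norm_eq_abs, Real.coe_toNNReal c hc]
    exact mul_le_mul_of_nonneg_right (hb x) (norm_nonneg _)
  have h := eLpNorm_le_nnreal_smul_eLpNorm_of_ae_le_mul hpt 2
  unfold l2norm
  calc (eLpNorm (fun x => (g x : ℂ) * v x) 2 volume).toReal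
      ≤ ((c.toNNReal : ℝ≥0∞) * eLpNorm v 2 volume).toReal := by
        apply ENNReal.toReal_mono
        · exact ENNReal.mul_ne_top ENNReal.coe_ne_top hv.2.ne
        · simpa [ENNReal.smul_def, smul_eq_mul] using h
    _ = c * (eLpNorm v 2 volume).toReal := by
        rw [ENNReal.toReal_mul, ENNReal.coe_toReal, Real.coe_toNNReal c hc]

lemma memL2_ofReal_mul {g : (Fin d → ℝ) → ℝ} {v : (Fin d → ℝ) → ℂ} {c : ℝ}
    (hv : MemLp v 2 (volume : Measure (Fin d → ℝ))) (hb : ∀ x, |g x| ≤ c)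
    (hgc : Continuous g) (hvc : Continuous v) :
    MemLp (fun x => (g x : ℂ) * v x) 2 (volume : Measure (Fin d → ℝ)) := by
  apply MemLp.of_le_mul (c := c) hv
    (((Complex.continuous_ofReal.comp hgc).mul hvc).aestronglyMeasurable)
  filter_upwards with x
  simp only [Pi.mul_apply, Function.comp_apply, norm_mul, Complex.norm_real, Real.norm_eq_abs]
  exact mul_le_mul_of_nonneg_right (hb x) (norm_nonneg _)

lemma memL2_list_sum {ι : Type*} {T : List ι} {F : ι → (Fin d → ℝ) → ℂ}
    (h : ∀ p ∈ T, MemLp (F p) 2 (volume : Measure (Fin d → ℝ))) :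
    MemLp (fun x => (T.map (fun p => F p x)).sum) 2 (volume : Measure (Fin d → ℝ)) := by
  induction T with
  | nil => simpa using zero_memLp
  | cons a T' ih =>
    simp only [List.map_cons, List.sum_cons]
    exact (h a (List.mem_cons_self)).add (ih fun p hp => h p (List.mem_cons_of_mem a hp))

lemma l2norm_list_sum_le {ι : Type*} {T : List ι} {F : ι → (Fin d → ℝ) → ℂ}
    (h : ∀ p ∈ T, MemLp (F p) 2 (volume : Measure (Fin d → ℝ))) :
    l2norm (fun x => (T.map (fun p => F p x)).sum) ≤ (T.map (fun p => l2norm (F p))).sum := by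
  induction T with
  | nil =>
    simp only [List.map_nil, List.sum_nil]
    have : l2norm (fun _ : Fin d → ℝ => (0:ℂ)) = 0 := by
      unfold l2norm; simp [eLpNorm_zero]
    simpa using le_of_eq this
  | cons a T' ih =>
    simp only [List.map_cons, List.sum_cons]
    have hsum := memL2_list_sum fun p hp => h p (List.mem_cons_of_mem a hp)
    calc l2norm (fun x => F a x + (T'.map (fun p => F p x)).sum)
        ≤ l2norm (F a) + l2norm (fun x => (T'.map (fun p => F p x)).sum) :=
          l2norm_add_le (h a (List.mem_cons_self)) hsum
      _ ≤ l2norm (F a) + (T'.map (fun p => l2norm (F p))).sum := by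
          have := ih fun p hp => h p (List.mem_cons_of_mem a hp)
          linarith

end L2Tools

noncomputable section HnormTools
variable {d : ℕ}

lemma l2norm_md_le_hnorm {m : ℕ} {γ : Fin d → ℕ} (hγ : ∑ i, γ i ≤ m)
    (v : (Fin d → ℝ) → ℂ) : l2norm (md γ v) ≤ hnorm d m v := by
  have hγi : ∀ i, γ i < m + 1 := by
    intro i
    have : γ i ≤ ∑ j, γ j :=
      Finset.single_le_sum (fun j _ => Nat.zero_le _) (Finset.mem_univ i)
    omega
  set α₀ : Fin d → Fin (m+1) := fun i => ⟨γ i, hγi i⟩ with hα₀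
  have hcoe : (fun i => ((α₀ i : ℕ))) = γ := by funext i; rfl
  have hterm : (if (∑ i, ((α₀ i : ℕ))) ≤ m
      then (l2norm (md (fun i => ((α₀ i : ℕ))) v)) ^ 2 else 0)
      = (l2norm (md γ v)) ^ 2 := by
    rw [hcoe, if_pos hγ]
  unfold hnorm
  rw [show (l2norm (md γ v)) = Real.sqrt ((l2norm (md γ v))^2) from
    (Real.sqrt_sq (l2norm_nonneg _)).symm]
  apply Real.sqrt_le_sqrt
  rw [← hterm]
  apply Finset.single_le_sum (f := fun α : Fin d → Fin (m+1) =>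
    if (∑ i, ((α i : ℕ))) ≤ m then (l2norm (md (fun i => ((α i : ℕ))) v)) ^ 2 else 0)
    (fun α _ => by positivity) (Finset.mem_univ α₀)

lemma hnorm_nonneg (d m : ℕ) (v : (Fin d → ℝ) → ℂ) : 0 ≤ hnorm d m v :=
  Real.sqrt_nonneg _

lemma hnorm_le_sqrt_card_mul {m : ℕ} {F : (Fin d → ℝ) → ℂ} {R : ℝ} (hR : 0 ≤ R)
    (h : ∀ α : Fin d → ℕ, (∑ i, α i) ≤ m → l2norm (md α F) ≤ R) :
    hnorm d m F ≤ Real.sqrt (((m+1)^d : ℕ)) * R := by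
  unfold hnorm
  have hbound : (∑ α : Fin d → Fin (m + 1),
      if (∑ i, (α i : ℕ)) ≤ m then (l2norm (md (fun i => (α i : ℕ)) F)) ^ 2 else 0)
      ≤ (((m+1)^d : ℕ) : ℝ) * R ^ 2 := by
    calc _ ≤ ∑ _α : Fin d → Fin (m + 1), R ^ 2 := by
          apply Finset.sum_le_sum
          intro α _
          by_cases hα : (∑ i, (α i : ℕ)) ≤ m
          · rw [if_pos hα]
            have h1 := h (fun i => (α i : ℕ)) hα
            have h2 := l2norm_nonneg (md (fun i => (α i : ℕ)) F)
            nlinarith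
          · rw [if_neg hα]; positivity
      _ = (((m+1)^d : ℕ) : ℝ) * R ^ 2 := by
          rw [Finset.sum_const]
          simp [Fintype.card_fun]
  calc Real.sqrt _ ≤ Real.sqrt ((((m+1)^d : ℕ) : ℝ) * R ^ 2) := Real.sqrt_le_sqrt hbound
    _ = Real.sqrt (((m+1)^d : ℕ)) * R := by
        rw [Real.sqrt_mul (by positivity), Real.sqrt_sq hR]

lemma list_sum_sub {ι : Type*} (T : List ι) (f g : ι → ℂ) :
    (T.map f).sum - (T.map g).sum = (T.map (fun p => f p - g p)).sum := by
  induction T with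
  | nil => simp
  | cons a T' ih => simp only [List.map_cons, List.sum_cons]; rw [← ih]; ring

lemma list_sum_le_length_mul {ι : Type*} (T : List ι) (f : ι → ℝ) {c : ℝ}
    (h : ∀ p ∈ T, f p ≤ c) : (T.map f).sum ≤ T.length * c := by
  induction T with
  | nil => simp
  | cons a T' ih =>
    simp only [List.map_cons, List.sum_cons, List.length_cons]
    have h1 := h a (List.mem_cons_self)
    have h2 := ih fun p hp => h p (List.mem_cons_of_mem a hp)
    push_cast
    linarith

end HnormTools

noncomputable section MainAux
variable {d m : ℕ} {V : (Fin d → ℝ) → ℝ}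

lemma md_sub_u {u₁ u₂ : (Fin d → ℝ) → ℂ} (hu₁ : ContDiff ℝ (m:ℕ) u₁)
    (hu₂ : ContDiff ℝ (m:ℕ) u₂) {γ : Fin d → ℕ} (hγ : ∑ i, γ i ≤ m) :
    md γ (fun x => u₂ x - u₁ x) = fun x => md γ u₂ x - md γ u₁ x := by
  have hdiffbl : ∀ (u : (Fin d → ℝ) → ℂ), ContDiff ℝ (m:ℕ) u →
      ∀ L'' : List (Fin d), L'' <:+ bigL γ → L''.length < (bigL γ).length →
      Differentiable ℝ (mdL L'' u) := by
    intro u hu L'' hsuf hlen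
    have hsort : L''.Pairwise (· ≤ ·) := (sorted_bigL γ).sublist hsuf.sublist
    rw [mdL_sorted_eq_md hsort]
    apply differentiable_md _ hu
    rw [sum_count_eq_length]
    rw [length_bigL] at hlen
    omega
  have h := mdL_sub (f := u₂) (g := u₁) (bigL γ)
    (hdiffbl u₂ hu₂) (hdiffbl u₁ hu₁)
  rw [md_eq_mdL, md_eq_mdL, md_eq_mdL]
  exact h

lemma md_conv_sub {w₁ w₂ : (Fin d → ℝ) → ℝ} (hV : ContDiffBdd d m V)
    (hw₁ : Integrable w₁ (volume : Measure (Fin d → ℝ)))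
    (hw₂ : Integrable w₂ (volume : Measure (Fin d → ℝ)))
    {β : Fin d → ℕ} (hβ : ∑ i, β i ≤ m) (x : Fin d → ℝ) :
    md β (conv V w₂) x - md β (conv V w₁) x = conv (md β V) (fun y => w₂ y - w₁ y) x := by
  rw [md_conv hV hw₂ hβ, md_conv hV hw₁ hβ]
  show (∫ y, md β V (x - y) * w₂ y) - (∫ y, md β V (x - y) * w₁ y) = _
  rw [← integral_sub
    (integrable_conv_integrand (continuous_md_V hV hβ) (fun z => md_V_le_Mbd hV hβ z) hw₂ x)
    (integrable_conv_integrand (continuous_md_V hV hβ) (fun z => md_V_le_Mbd hV hβ z) hw₁ x)]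
  show _ = ∫ y, md β V (x - y) * (w₂ y - w₁ y)
  congr 1
  funext y
  ring

end MainAux

noncomputable section KeyEst
variable {d m : ℕ} {V : (Fin d → ℝ) → ℝ}

lemma termList_sums {L : List (Fin d)} {p : (Fin d → ℕ) × (Fin d → ℕ)}
    (hp : p ∈ termList L) : (∑ j, p.1 j) + (∑ j, p.2 j) = L.length := by
  have hP := sum_termList hp
  have h1 : ∑ j, (p.1 + p.2) j = ∑ j, L.count j := by rw [hP]
  simp only [Pi.add_apply] at h1
  rw [Finset.sum_add_distrib] at h1
  rw [h1, sum_count_eq_length]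

set_option maxHeartbeats 8000000 in
lemma key_estimate (hV : ContDiffBdd d m V) {u₁ u₂ : (Fin d → ℝ) → ℂ}
    (hu₁ : ContDiffL2 d m u₁) (hu₂ : ContDiffL2 d m u₂)
    {α : Fin d → ℕ} (hα : ∑ i, α i ≤ m) :
    l2norm (md α (fun x => ((∫ y, V (x - y) * ‖u₂ y‖ ^ 2 : ℝ) : ℂ) * u₂ x
        - ((∫ y, V (x - y) * ‖u₁ y‖ ^ 2 : ℝ) : ℂ) * u₁ x))
      ≤ 2^(m+1) * Mbd hV *
        ((hnorm d m u₁ ^ 2 + hnorm d m u₂ ^ 2) * hnorm d m (fun x => u₂ x - u₁ x)) := by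
  classical
  have hM := Mbd_pos hV
  set a := hnorm d m u₁ with hadef
  set b := hnorm d m u₂ with hbdef
  set δ := hnorm d m (fun x => u₂ x - u₁ x) with hδdef
  have han : 0 ≤ a := hnorm_nonneg d m u₁
  have hbn : 0 ≤ b := hnorm_nonneg d m u₂
  have hδn : 0 ≤ δ := hnorm_nonneg d m _
  have hu10 : MemLp u₁ 2 (volume : Measure (Fin d → ℝ)) := by
    have h := hu₁.2 (0 : Fin d → ℕ) (by simp)
    rwa [md_zero'] at h
  have hu20 : MemLp u₂ 2 (volume : Measure (Fin d → ℝ)) := by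
    have h := hu₂.2 (0 : Fin d → ℕ) (by simp)
    rwa [md_zero'] at h
  set w₁ := fun y => ‖u₁ y‖ ^ 2 with hw₁def
  set w₂ := fun y => ‖u₂ y‖ ^ 2 with hw₂def
  have hw1 : Integrable w₁ (volume : Measure (Fin d → ℝ)) := integrable_sq_norm hu10
  have hw2 : Integrable w₂ (volume : Measure (Fin d → ℝ)) := integrable_sq_norm hu20
  have ha0 : l2norm u₁ ≤ a := by
    have h := l2norm_md_le_hnorm (m := m) (γ := (0 : Fin d → ℕ)) (by simp) u₁
    rwa [md_zero'] at h
  have hb0 : l2norm u₂ ≤ b := by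
    have h := l2norm_md_le_hnorm (m := m) (γ := (0 : Fin d → ℕ)) (by simp) u₂
    rwa [md_zero'] at h
  have hδ0 : l2norm (fun x => u₂ x - u₁ x) ≤ δ := by
    have h := l2norm_md_le_hnorm (m := m) (γ := (0 : Fin d → ℕ)) (by simp)
      (fun x => u₂ x - u₁ x)
    rwa [md_zero'] at h
  have hEw2 : ∫ y, |w₂ y| ≤ b ^ 2 := by
    have h1 : ∫ y, |w₂ y| = ∫ y, w₂ y := by
      apply integral_congr_ae
      filter_upwards with y
      exact abs_of_nonneg (by positivity)
    rw [h1]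
    calc ∫ y, w₂ y ≤ (l2norm u₂) ^ 2 := int_sq_le hu20
      _ ≤ b ^ 2 := by nlinarith [l2norm_nonneg u₂]
  have hEwd : ∫ y, |w₂ y - w₁ y| ≤ (b + a) * δ := by
    calc ∫ y, |w₂ y - w₁ y|
        ≤ (l2norm u₂ + l2norm u₁) * l2norm (fun y => u₂ y - u₁ y) :=
          w_diff_int_le hu10 hu20
      _ ≤ (b + a) * δ := by
          apply mul_le_mul (by linarith) hδ0 (l2norm_nonneg _) (by linarith)
  set G₁ := conv V w₁ with hG₁def
  set G₂ := conv V w₂ with hG₂def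
  have hG2b : ∀ β : Fin d → ℕ, (∑ i, β i) ≤ m → ∀ x, |md β G₂ x| ≤ Mbd hV * b ^ 2 := by
    intro β hβ x
    calc |md β G₂ x| ≤ Mbd hV * ∫ y, |w₂ y| := md_conv_bound hV hw2 hβ x
      _ ≤ Mbd hV * b ^ 2 := mul_le_mul_of_nonneg_left hEw2 (le_of_lt hM)
  have hGdb : ∀ β : Fin d → ℕ, (∑ i, β i) ≤ m → ∀ x,
      |md β G₂ x - md β G₁ x| ≤ Mbd hV * ((b + a) * δ) := by
    intro β hβ x
    rw [md_conv_sub hV hw1 hw2 hβ x]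
    calc |conv (md β V) (fun y => w₂ y - w₁ y) x|
        ≤ Mbd hV * ∫ y, |w₂ y - w₁ y| :=
          conv_bound (continuous_md_V hV hβ) (fun z => md_V_le_Mbd hV hβ z)
            (hw2.sub hw1) x
      _ ≤ Mbd hV * ((b + a) * δ) := mul_le_mul_of_nonneg_left hEwd (le_of_lt hM)
  set L := bigL α with hLdef
  have hLsort := sorted_bigL α
  have hLlen : L.length = ∑ i, α i := length_bigL α
  have hg₂ : ∀ β : Fin d → ℕ, (∑ i, β i) < m → Differentiable ℝ (md β G₂) :=
    fun β hβ => differentiable_md_conv hV hw2 hβ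
  have hg₁ : ∀ β : Fin d → ℕ, (∑ i, β i) < m → Differentiable ℝ (md β G₁) :=
    fun β hβ => differentiable_md_conv hV hw1 hβ
  have hexpand : ∀ (g : (Fin d → ℝ) → ℝ) (u : (Fin d → ℝ) → ℂ),
      (∀ β : Fin d → ℕ, (∑ i, β i) < m → Differentiable ℝ (md β g)) →
      ContDiff ℝ (m:ℕ) u →
      ∀ L'' : List (Fin d), L'' <:+ L →
        mdL L'' (fun y => (g y : ℂ) * u y)
          = fun x => ((termList L'').map
              (fun p => ((md p.1 g x : ℝ) : ℂ) * md p.2 u x)).sum := by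
    intro g u hg hu L'' hsuf
    have hsort : L''.Pairwise (· ≤ ·) := hLsort.sublist hsuf.sublist
    have hlen'' : L''.length ≤ m :=
      le_trans (List.IsSuffix.length_le hsuf) (by rw [hLlen]; exact hα)
    apply mdL_mul_expansion L'' hsort
    · intro β _ hβl
      exact hg β (by omega)
    · intro γ _ hγl
      exact differentiable_md γ hu (by omega)
  have hsuffdiff : ∀ (g : (Fin d → ℝ) → ℝ) (u : (Fin d → ℝ) → ℂ),
      (∀ β : Fin d → ℕ, (∑ i, β i) < m → Differentiable ℝ (md β g)) →
      ContDiff ℝ (m:ℕ) u →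
      ∀ L'' : List (Fin d), L'' <:+ L → L''.length < L.length →
        Differentiable ℝ (mdL L'' (fun y => (g y : ℂ) * u y)) := by
    intro g u hg hu L'' hsuf hlen
    rw [hexpand g u hg hu L'' hsuf]
    intro x
    apply differentiableAt_list_sum
    intro p hp
    have hsums := termList_sums hp
    have hlm : L''.length < m := by
      rw [hLlen] at hlen; omega
    have h1 : Differentiable ℝ (md p.1 g) := hg p.1 (by omega)
    have h2 : Differentiable ℝ (md p.2 u) := differentiable_md p.2 hu (by omega)
    exact ((Complex.ofRealCLM.differentiable.comp h1).mul h2).differentiableAt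
  have hmdF : md α (fun x => ((G₂ x : ℝ) : ℂ) * u₂ x - ((G₁ x : ℝ) : ℂ) * u₁ x)
      = fun x => ((termList L).map
          (fun p => (((md p.1 G₂ x : ℝ) : ℂ) * md p.2 u₂ x)
            - (((md p.1 G₁ x : ℝ) : ℂ) * md p.2 u₁ x))).sum := by
    rw [md_eq_mdL]
    rw [mdL_sub (f := fun y => ((G₂ y : ℝ) : ℂ) * u₂ y)
      (g := fun y => ((G₁ y : ℝ) : ℂ) * u₁ y) L
      (fun L'' h1 h2 => hsuffdiff G₂ u₂ hg₂ hu₂.1 L'' h1 h2)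
      (fun L'' h1 h2 => hsuffdiff G₁ u₁ hg₁ hu₁.1 L'' h1 h2)]
    funext x
    rw [congrFun (hexpand G₂ u₂ hg₂ hu₂.1 L (List.suffix_refl L)) x,
      congrFun (hexpand G₁ u₁ hg₁ hu₁.1 L (List.suffix_refl L)) x,
      list_sum_sub]
  -- per-term analysis
  have hterm : ∀ p ∈ termList L,
      MemLp (fun x => (((md p.1 G₂ x : ℝ) : ℂ) * md p.2 u₂ x)
        - (((md p.1 G₁ x : ℝ) : ℂ) * md p.2 u₁ x)) 2 (volume : Measure (Fin d → ℝ))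
      ∧ l2norm (fun x => (((md p.1 G₂ x : ℝ) : ℂ) * md p.2 u₂ x)
        - (((md p.1 G₁ x : ℝ) : ℂ) * md p.2 u₁ x))
        ≤ 2 * Mbd hV * ((a ^ 2 + b ^ 2) * δ) := by
    intro p hp
    have hsums := termList_sums hp
    have hp1 : (∑ i, p.1 i) ≤ m := by rw [hLlen] at hsums; omega
    have hp2 : (∑ i, p.2 i) ≤ m := by rw [hLlen] at hsums; omega
    have hrw : (fun x => (((md p.1 G₂ x : ℝ) : ℂ) * md p.2 u₂ x)
        - (((md p.1 G₁ x : ℝ) : ℂ) * md p.2 u₁ x))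
        = fun x => (((md p.1 G₂ x : ℝ) : ℂ) * (md p.2 u₂ x - md p.2 u₁ x))
          + (((md p.1 G₂ x - md p.1 G₁ x : ℝ) : ℂ) * md p.2 u₁ x) := by
      funext x
      push_cast
      ring
    rw [hrw]
    have hMem2 : MemLp (md p.2 u₂) 2 (volume : Measure (Fin d → ℝ)) := hu₂.2 p.2 hp2
    have hMem1 : MemLp (md p.2 u₁) 2 (volume : Measure (Fin d → ℝ)) := hu₁.2 p.2 hp2
    have hMemD : MemLp (fun x => md p.2 u₂ x - md p.2 u₁ x) 2
        (volume : Measure (Fin d → ℝ)) := hMem2.sub hMem1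
    have hcont2 : Continuous (md p.2 u₂) := continuous_md p.2 hu₂.1 hp2
    have hcont1 : Continuous (md p.2 u₁) := continuous_md p.2 hu₁.1 hp2
    have hcontD : Continuous (fun x => md p.2 u₂ x - md p.2 u₁ x) := hcont2.sub hcont1
    have hcontG2 : Continuous (md p.1 G₂) := continuous_md_conv hV hw2 hp1
    have hcontG1 : Continuous (md p.1 G₁) := continuous_md_conv hV hw1 hp1
    have hcontGd : Continuous (fun x => md p.1 G₂ x - md p.1 G₁ x) := hcontG2.sub hcontG1
    have hMemA : MemLp (fun x => ((md p.1 G₂ x : ℝ) : ℂ) * (md p.2 u₂ x - md p.2 u₁ x)) 2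
        (volume : Measure (Fin d → ℝ)) :=
      memL2_ofReal_mul hMemD (hG2b p.1 hp1) hcontG2 hcontD
    have hMemB : MemLp (fun x => ((md p.1 G₂ x - md p.1 G₁ x : ℝ) : ℂ) * md p.2 u₁ x) 2
        (volume : Measure (Fin d → ℝ)) :=
      memL2_ofReal_mul hMem1 (hGdb p.1 hp1) hcontGd hcont1
    have hl2D : l2norm (fun x => md p.2 u₂ x - md p.2 u₁ x) ≤ δ := by
      rw [← md_sub_u hu₁.1 hu₂.1 hp2]
      exact l2norm_md_le_hnorm hp2 _
    have hl2u1 : l2norm (md p.2 u₁) ≤ a := l2norm_md_le_hnorm hp2 u₁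
    have hl2A : l2norm (fun x => ((md p.1 G₂ x : ℝ) : ℂ) * (md p.2 u₂ x - md p.2 u₁ x))
        ≤ (Mbd hV * b ^ 2) * δ := by
      calc _ ≤ (Mbd hV * b ^ 2) * l2norm (fun x => md p.2 u₂ x - md p.2 u₁ x) :=
            l2norm_ofReal_mul_le hMemD (hG2b p.1 hp1)
        _ ≤ (Mbd hV * b ^ 2) * δ :=
            mul_le_mul_of_nonneg_left hl2D (by positivity)
    have hl2B : l2norm (fun x => ((md p.1 G₂ x - md p.1 G₁ x : ℝ) : ℂ) * md p.2 u₁ x)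
        ≤ (Mbd hV * ((b + a) * δ)) * a := by
      calc _ ≤ (Mbd hV * ((b + a) * δ)) * l2norm (md p.2 u₁) :=
            l2norm_ofReal_mul_le hMem1 (hGdb p.1 hp1)
        _ ≤ (Mbd hV * ((b + a) * δ)) * a := by
            apply mul_le_mul_of_nonneg_left hl2u1
            positivity
    refine ⟨hMemA.add hMemB, ?_⟩
    calc l2norm (fun x => ((md p.1 G₂ x : ℝ) : ℂ) * (md p.2 u₂ x - md p.2 u₁ x)
          + ((md p.1 G₂ x - md p.1 G₁ x : ℝ) : ℂ) * md p.2 u₁ x)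
        ≤ _ + _ := l2norm_add_le hMemA hMemB
      _ ≤ (Mbd hV * b ^ 2) * δ + (Mbd hV * ((b + a) * δ)) * a := add_le_add hl2A hl2B
      _ ≤ 2 * Mbd hV * ((a ^ 2 + b ^ 2) * δ) := by
          nlinarith [mul_nonneg (mul_nonneg hM.le hδn) (sq_nonneg (a - b)),
            mul_nonneg (mul_nonneg hM.le hδn) (sq_nonneg (a + b))]
  -- assemble
  have hfinal : l2norm (md α (fun x => ((G₂ x : ℝ) : ℂ) * u₂ x - ((G₁ x : ℝ) : ℂ) * u₁ x))
      ≤ 2 ^ (m + 1) * Mbd hV * ((a ^ 2 + b ^ 2) * δ) := by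
    rw [hmdF]
    calc l2norm (fun x => ((termList L).map
          (fun p => (((md p.1 G₂ x : ℝ) : ℂ) * md p.2 u₂ x)
            - (((md p.1 G₁ x : ℝ) : ℂ) * md p.2 u₁ x))).sum)
        ≤ ((termList L).map (fun p => l2norm (fun x =>
            (((md p.1 G₂ x : ℝ) : ℂ) * md p.2 u₂ x)
              - (((md p.1 G₁ x : ℝ) : ℂ) * md p.2 u₁ x)))).sum :=
          l2norm_list_sum_le (fun p hp => (hterm p hp).1)
      _ ≤ (termList L).length * (2 * Mbd hV * ((a ^ 2 + b ^ 2) * δ)) :=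
          list_sum_le_length_mul _ _ (fun p hp => (hterm p hp).2)
      _ ≤ 2 ^ (m + 1) * Mbd hV * ((a ^ 2 + b ^ 2) * δ) := by
          rw [length_termList]
          have h2 : (2:ℝ) ^ L.length ≤ 2 ^ m := by
            apply pow_le_pow_right₀ (by norm_num)
            rw [hLlen]; exact hα
          have hx : (0:ℝ) ≤ 2 * Mbd hV * ((a ^ 2 + b ^ 2) * δ) := by positivity
          have hcast : ((2 ^ L.length : ℕ) : ℝ) = 2 ^ L.length := by push_cast; ring
          rw [hcast]
          calc (2:ℝ) ^ L.length * (2 * Mbd hV * ((a ^ 2 + b ^ 2) * δ))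
              ≤ 2 ^ m * (2 * Mbd hV * ((a ^ 2 + b ^ 2) * δ)) :=
                mul_le_mul_of_nonneg_right h2 hx
            _ = 2 ^ (m + 1) * Mbd hV * ((a ^ 2 + b ^ 2) * δ) := by ring
  exact hfinal

end KeyEst


set_option maxHeartbeats 2000000 in
theorem statement4 (d m : ℕ) (hd : 1 ≤ d) (V : (Fin d → ℝ) → ℝ)
    (hV : ContDiffBdd d m V) :
    ∃ C : ℝ, 0 < C ∧ ∀ u₁ u₂ : (Fin d → ℝ) → ℂ,
      ContDiffL2 d m u₁ → ContDiffL2 d m u₂ →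
      hnorm d m (fun x => ((∫ y, V (x - y) * ‖u₂ y‖ ^ 2 : ℝ) : ℂ) * u₂ x
          - ((∫ y, V (x - y) * ‖u₁ y‖ ^ 2 : ℝ) : ℂ) * u₁ x)
        ≤ C * (hnorm d m u₁ ^ 2 + hnorm d m u₂ ^ 2) * hnorm d m (fun x => u₂ x - u₁ x) := by
  refine ⟨Real.sqrt (((m+1)^d : ℕ)) * (2^(m+1) * Mbd hV), ?_, ?_⟩
  · apply mul_pos
    · apply Real.sqrt_pos.2
      have : 0 < ((m+1)^d : ℕ) := pow_pos (Nat.succ_pos m) d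
      exact_mod_cast this
    · exact mul_pos (by positivity) (Mbd_pos hV)
  · intro u₁ u₂ hu₁ hu₂
    have han := hnorm_nonneg d m u₁
    have hbn := hnorm_nonneg d m u₂
    have hδn := hnorm_nonneg d m (fun x => u₂ x - u₁ x)
    have hR : 0 ≤ 2^(m+1) * Mbd hV *
        ((hnorm d m u₁ ^ 2 + hnorm d m u₂ ^ 2) * hnorm d m (fun x => u₂ x - u₁ x)) := by
      apply mul_nonneg (mul_nonneg (by positivity) (Mbd_pos hV).le)
      exact mul_nonneg (by positivity) hδn
    have h := hnorm_le_sqrt_card_mul (d := d) (m := m)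
      (F := fun x => ((∫ y, V (x - y) * ‖u₂ y‖ ^ 2 : ℝ) : ℂ) * u₂ x
          - ((∫ y, V (x - y) * ‖u₁ y‖ ^ 2 : ℝ) : ℂ) * u₁ x) hR
      (fun α hα => key_estimate hV hu₁ hu₂ hα)
    calc hnorm d m (fun x => ((∫ y, V (x - y) * ‖u₂ y‖ ^ 2 : ℝ) : ℂ) * u₂ x
          - ((∫ y, V (x - y) * ‖u₁ y‖ ^ 2 : ℝ) : ℂ) * u₁ x)
        ≤ Real.sqrt (((m+1)^d : ℕ)) * (2^(m+1) * Mbd hV *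
            ((hnorm d m u₁ ^ 2 + hnorm d m u₂ ^ 2) * hnorm d m (fun x => u₂ x - u₁ x))) := h
      _ = Real.sqrt (((m+1)^d : ℕ)) * (2^(m+1) * Mbd hV) *
            (hnorm d m u₁ ^ 2 + hnorm d m u₂ ^ 2) * hnorm d m (fun x => u₂ x - u₁ x) := by
          ring
end

section
/- Let (Ω, 𝓕, ℙ) be a probability space, let T ∈ (0,∞), N ∈ ℕ with N ≥ 1, and set τ = T/N; assume τ ≤ 1. Let X_0, …, X_N : Ω → [0,∞) be measurable, let p, q ∈ [1,∞) with p ≤ q, let ε ∈ (0,1) with q ε ≥ 1, and let K ∈ [0,∞) be such that (𝔼[X_n^q])^{1/q} ≤ K τ for every n ∈ {0, …, N}. Then (𝔼[(max_{0 ≤ n ≤ N} X_n)^p])^{1/p} ≤ (2T)^{1/q} K τ^{1−ε}. -/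
open MeasureTheory Filter
open scoped ENNReal NNReal BigOperators Topology

theorem statement16 {Ω : Type*} [MeasurableSpace Ω] (P : Measure Ω) [IsProbabilityMeasure P]
    (T : ℝ) (hT : 0 < T) (N : ℕ) (hN : 1 ≤ N) (τ : ℝ) (hτdef : τ = T / N) (hτ : τ ≤ 1)
    (X : ℕ → Ω → ℝ≥0) (hX : ∀ n ≤ N, Measurable (X n))
    (p q : ℝ) (hp : 1 ≤ p) (hpq : p ≤ q)
    (ε : ℝ) (hε : ε ∈ Set.Ioo (0 : ℝ) 1) (hqε : 1 ≤ q * ε)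
    (K : ℝ) (hK : 0 ≤ K)
    (hmom : ∀ n ≤ N, (∫⁻ ω, ((X n ω : ℝ≥0∞)) ^ q ∂P) ^ (1 / q) ≤ ENNReal.ofReal (K * τ)) :
    (∫⁻ ω, ((((Finset.Iic N).sup fun n => X n ω) : ℝ≥0∞)) ^ p ∂P) ^ (1 / p)
      ≤ ENNReal.ofReal ((2 * T) ^ (1 / q) * K * τ ^ (1 - ε)) := by

  have hq : (1:ℝ) ≤ q := hp.trans hpq
  have hp0 : (0:ℝ) < p := lt_of_lt_of_le one_pos hp
  have hq0 : (0:ℝ) < q := lt_of_lt_of_le one_pos hq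
  have hN0 : (0:ℝ) < (N:ℝ) := by exact_mod_cast hN
  have hτ0 : 0 < τ := by rw [hτdef]; positivity
  have hne : (Finset.Iic N).Nonempty := ⟨0, Finset.mem_Iic.mpr (Nat.zero_le N)⟩
  -- measurability of the sup
  have hfm : Measurable (fun ω => ((Finset.Iic N).sup fun n => X n ω : ℝ≥0)) := by
    have h1 := Finset.measurable_sup' (s := Finset.Iic N) hne (f := fun n => X n)
      (fun n hn => hX n (Finset.mem_Iic.mp hn))
    have : (fun ω => ((Finset.Iic N).sup fun n => X n ω : ℝ≥0))
        = (Finset.Iic N).sup' hne (fun n => X n) := by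
      funext ω
      rw [Finset.sup'_apply, Finset.sup'_eq_sup]
    rw [this]; exact h1
  -- Step A : p-norm ≤ q-norm
  have hA : (∫⁻ ω, ((((Finset.Iic N).sup fun n => X n ω) : ℝ≥0∞)) ^ p ∂P) ^ (1 / p)
      ≤ (∫⁻ ω, ((((Finset.Iic N).sup fun n => X n ω) : ℝ≥0∞)) ^ q ∂P) ^ (1 / q) := by
    have hgm : AEStronglyMeasurable
        (fun ω => ((((Finset.Iic N).sup fun n => X n ω) : ℝ≥0) : ℝ)) P :=
      (NNReal.continuous_coe.measurable.comp hfm).aestronglyMeasurable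
    have h1 := eLpNorm_le_eLpNorm_of_exponent_le (μ := P)
      (ENNReal.ofReal_le_ofReal hpq) hgm
    rw [eLpNorm_eq_lintegral_rpow_enorm_toReal (ENNReal.ofReal_pos.mpr hp0).ne' ENNReal.ofReal_ne_top,
        eLpNorm_eq_lintegral_rpow_enorm_toReal (ENNReal.ofReal_pos.mpr hq0).ne' ENNReal.ofReal_ne_top,
        ENNReal.toReal_ofReal hp0.le, ENNReal.toReal_ofReal hq0.le] at h1
    simpa [enorm_eq_nnnorm, NNReal.nnnorm_eq] using h1
  -- Step B : q-th moment of sup ≤ sum of q-th moments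
  have hB : (∫⁻ ω, ((((Finset.Iic N).sup fun n => X n ω) : ℝ≥0∞)) ^ q ∂P)
      ≤ ∑ n ∈ Finset.Iic N, ∫⁻ ω, ((X n ω : ℝ≥0∞)) ^ q ∂P := by
    rw [← lintegral_finset_sum' _ (fun n hn =>
      ((hX n (Finset.mem_Iic.mp hn)).coe_nnreal_ennreal.pow_const q).aemeasurable)]
    refine lintegral_mono fun ω => ?_
    obtain ⟨n₀, hn₀, hsup⟩ := Finset.exists_mem_eq_sup (Finset.Iic N) hne
      (fun n => ((X n ω : ℝ≥0∞)))
    calc ((((Finset.Iic N).sup fun n => X n ω) : ℝ≥0∞)) ^ q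
        = ((X n₀ ω : ℝ≥0∞)) ^ q := by rw [hsup]
      _ ≤ ∑ n ∈ Finset.Iic N, ((X n ω : ℝ≥0∞)) ^ q :=
          Finset.single_le_sum (f := fun n => ((X n ω : ℝ≥0∞)) ^ q)
            (fun i _ => zero_le) hn₀
  -- Step C : bound each moment
  have hC : (∑ n ∈ Finset.Iic N, ∫⁻ ω, ((X n ω : ℝ≥0∞)) ^ q ∂P)
      ≤ ((N : ℝ≥0∞) + 1) * (ENNReal.ofReal (K * τ)) ^ q := by
    have hterm : ∀ n ∈ Finset.Iic N,
        (∫⁻ ω, ((X n ω : ℝ≥0∞)) ^ q ∂P) ≤ (ENNReal.ofReal (K * τ)) ^ q := by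
      intro n hn
      have h1 := ENNReal.rpow_le_rpow (hmom n (Finset.mem_Iic.mp hn)) hq0.le
      rwa [← ENNReal.rpow_mul, one_div_mul_cancel hq0.ne', ENNReal.rpow_one] at h1
    calc (∑ n ∈ Finset.Iic N, ∫⁻ ω, ((X n ω : ℝ≥0∞)) ^ q ∂P)
        ≤ ∑ _n ∈ Finset.Iic N, (ENNReal.ofReal (K * τ)) ^ q := Finset.sum_le_sum hterm
      _ = ((N : ℝ≥0∞) + 1) * (ENNReal.ofReal (K * τ)) ^ q := by
          rw [Finset.sum_const, Nat.card_Iic, nsmul_eq_mul]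
          push_cast
          ring
  -- real-number inequality
  have hεq : 1 / q ≤ ε := by
    rw [div_le_iff₀ hq0]
    linarith [hqε]
  have hreal : ((N:ℝ) + 1) ^ (1/q) * (K * τ) ≤ (2*T) ^ (1/q) * K * τ ^ (1-ε) := by
    have hNτ : (N:ℝ) = T / τ := by
      rw [hτdef, div_div_eq_mul_div, mul_comm, mul_div_assoc, div_self hT.ne', mul_one]
    have h1 : ((N:ℝ) + 1) ≤ 2 * T / τ := by
      have h2 : ((N:ℝ) + 1) ≤ 2 * (N:ℝ) := by
        have : (1:ℝ) ≤ (N:ℝ) := by exact_mod_cast hN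
        linarith
      calc ((N:ℝ) + 1) ≤ 2 * (N:ℝ) := h2
        _ = 2 * T / τ := by rw [hNτ]; ring
    have h2 : ((N:ℝ) + 1) ^ (1/q) ≤ (2*T/τ) ^ (1/q) :=
      Real.rpow_le_rpow (by positivity) h1 (by positivity)
    have h3 : (2*T/τ : ℝ) ^ (1/q) = (2*T) ^ (1/q) / τ ^ (1/q) :=
      Real.div_rpow (by positivity) hτ0.le (1/q)
    have h4 : τ / τ ^ (1/q) = τ ^ (1 - 1/q) := by
      rw [Real.rpow_sub hτ0, Real.rpow_one]
    have h5 : τ ^ (1 - 1/q) ≤ τ ^ (1 - ε) :=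
      Real.rpow_le_rpow_of_exponent_ge hτ0 hτ (by linarith)
    calc ((N:ℝ) + 1) ^ (1/q) * (K * τ)
        ≤ ((2*T) ^ (1/q) / τ ^ (1/q)) * (K * τ) := by
          apply mul_le_mul_of_nonneg_right (h2.trans_eq h3) (by positivity)
      _ = (2*T) ^ (1/q) * K * (τ / τ ^ (1/q)) := by ring
      _ = (2*T) ^ (1/q) * K * τ ^ (1 - 1/q) := by rw [h4]
      _ ≤ (2*T) ^ (1/q) * K * τ ^ (1 - ε) := by
          apply mul_le_mul_of_nonneg_left h5 (by positivity)
  -- final ENNReal bound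
  have hfinal : ((N : ℝ≥0∞) + 1) ^ (1/q) * ENNReal.ofReal (K * τ)
      ≤ ENNReal.ofReal ((2*T) ^ (1/q) * K * τ ^ (1-ε)) := by
    have hcast : ((N : ℝ≥0∞) + 1) = ENNReal.ofReal ((N:ℝ) + 1) := by
      rw [ENNReal.ofReal_add (by positivity) zero_le_one]
      simp
    rw [hcast, ENNReal.ofReal_rpow_of_pos (by positivity),
        ← ENNReal.ofReal_mul (by positivity)]
    exact ENNReal.ofReal_le_ofReal hreal
  calc (∫⁻ ω, ((((Finset.Iic N).sup fun n => X n ω) : ℝ≥0∞)) ^ p ∂P) ^ (1 / p)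
      ≤ (∫⁻ ω, ((((Finset.Iic N).sup fun n => X n ω) : ℝ≥0∞)) ^ q ∂P) ^ (1 / q) := hA
    _ ≤ (((N : ℝ≥0∞) + 1) * (ENNReal.ofReal (K * τ)) ^ q) ^ (1/q) :=
        ENNReal.rpow_le_rpow (hB.trans hC) (by positivity)
    _ = ((N : ℝ≥0∞) + 1) ^ (1/q) * ENNReal.ofReal (K * τ) := by
        rw [ENNReal.mul_rpow_of_nonneg _ _ (by positivity), ← ENNReal.rpow_mul,
          mul_one_div, div_self hq0.ne', ENNReal.rpow_one]
    _ ≤ ENNReal.ofReal ((2*T) ^ (1/q) * K * τ ^ (1-ε)) := hfinal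
end
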